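/- arXiv:math/0405259 — 7 statements merged into one kernel-verified Lean document; each statement's English description precedes it below -/
import Mathlib

section
/- Let n ≥ 1 and let p_1,…,p_n be positive integers. Define V = {x ∈ (ℂ∖{0})^n : there exists ξ ∈ ℂ^n with ξ_i^{p_i} = x_i for every i = 1,…,n and ξ_1 + ⋯ + ξ_n = 1}. Then the complement ℝ^n ∖ Log(V) has exactly n + 1 connected components. -/
open Finset

lemma pair_split (a b s : ℝ) (ha : 0 ≤ a) (hb : 0 ≤ b) (h1 : |a - b| ≤ s) (h2 : s ≤ a + b)
    (w : ℂ) (hw : ‖w‖ = s) :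
    ∃ x y : ℂ, ‖x‖ = a ∧ ‖y‖ = b ∧ x + y = w := by
  have h1' := abs_le.mp h1
  rcases eq_or_lt_of_le (le_trans (abs_nonneg _) h1) with hs0 | hs
  · -- s = 0
    have hab : a = b := by
      have h0 : |a - b| ≤ 0 := by rw [hs0]; exact h1
      have := abs_nonpos_iff.mp h0
      linarith [sub_eq_zero.mp this]
    have hw0 : w = 0 := by
      have : ‖w‖ = 0 := by rw [hw, ← hs0]
      exact norm_eq_zero.mp this
    refine ⟨(a : ℂ), -(a : ℂ), ?_, ?_, by rw [hw0]; ring⟩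
    · rw [Complex.norm_real, Real.norm_eq_abs, abs_of_nonneg ha]
    · rw [norm_neg, Complex.norm_real, Real.norm_eq_abs, abs_of_nonneg ha, hab]
  · set p : ℝ := (s^2 + a^2 - b^2)/(2*s) with hp
    have hs' : s ≠ 0 := ne_of_gt hs
    have hq2 : 0 ≤ a^2 - p^2 := by
      have key : a^2 - p^2 = (((s+a)^2 - b^2)*(b^2 - (s-a)^2))/(2*s)^2 := by
        rw [hp]; field_simp; ring
      rw [key]
      apply div_nonneg _ (sq_nonneg _)
      apply mul_nonneg
      · nlinarith
      · nlinarith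
    set q : ℝ := Real.sqrt (a^2 - p^2) with hqdef
    have hqsq : q^2 = a^2 - p^2 := Real.sq_sqrt hq2
    set x₀ : ℂ := Complex.mk p q with hx0
    set y₀ : ℂ := Complex.mk (s - p) (-q) with hy0
    have habs_x0 : ‖x₀‖ = a := by
      rw [Complex.norm_def, Complex.normSq_mk]
      have : p * p + q * q = a^2 := by nlinarith
      rw [this, Real.sqrt_sq ha]
    have h2sp : 2 * s * p = s^2 + a^2 - b^2 := by rw [hp]; field_simp
    have habs_y0 : ‖y₀‖ = b := by
      rw [Complex.norm_def, Complex.normSq_mk]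
      have : (s - p) * (s - p) + -q * -q = b^2 := by nlinarith
      rw [this, Real.sqrt_sq hb]
    refine ⟨x₀ * (w / s), y₀ * (w / s), ?_, ?_, ?_⟩
    · rw [norm_mul, norm_div, habs_x0, hw, Complex.norm_real, Real.norm_eq_abs, abs_of_pos hs, div_self hs', mul_one]
    · rw [norm_mul, norm_div, habs_y0, hw, Complex.norm_real, Real.norm_eq_abs, abs_of_pos hs, div_self hs', mul_one]
    · have hxy : x₀ + y₀ = (s : ℂ) := by
        rw [hx0, hy0, Complex.ext_iff]
        constructor <;> simp
      rw [← add_mul, hxy]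
      have : (s:ℂ) ≠ 0 := by exact_mod_cast hs'
      field_simp

lemma polygon : ∀ (m : ℕ) (r : Fin m → ℝ) (w : ℂ), (∀ i, 0 ≤ r i) →
    ‖w‖ ≤ ∑ i, r i → (∀ i, 2 * r i ≤ ‖w‖ + ∑ i, r i) →
    ∃ ξ : Fin m → ℂ, (∀ i, ‖ξ i‖ = r i) ∧ ∑ i, ξ i = w := by
  intro m
  induction m with
  | zero =>
    intro r w _ hle _
    have hw0 : w = 0 := by
      have : ‖w‖ ≤ 0 := by simpa using hle
      exact norm_eq_zero.mp (le_antisymm this (norm_nonneg w))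
    exact ⟨fun i => i.elim0, fun i => i.elim0, by simp [hw0]⟩
  | succ k IH =>
    match k, IH with
    | 0, _ =>
      intro r w hr hle hineq
      have h0 : ∑ i, r i = r 0 := by simp
      have : r 0 ≤ ‖w‖ := by have := hineq 0; rw [h0] at this; linarith
      have habs : ‖w‖ = r 0 := le_antisymm (by rwa [h0] at hle) this
      refine ⟨fun _ => w, fun i => ?_, by simp⟩
      have : i = 0 := by omega
      rw [this, habs]
    | k' + 1, IH =>
      intro r w hr hle hineq
      set W := ‖w‖ with hW
      have hW0 : 0 ≤ W := norm_nonneg w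
      set a := r 0 with hadef
      set b := r 1 with hbdef
      set rest : Fin k' → ℝ := fun j => r j.succ.succ with hrest
      set T := ∑ j, rest j with hT
      have hT0 : 0 ≤ T := Finset.sum_nonneg fun j _ => hr _
      have h01 : (Fin.succ 0 : Fin (k' + 1 + 1)) = 1 := by
        ext; simp [Fin.val_one]
      have hsum : ∑ i, r i = a + b + T := by
        rw [Fin.sum_univ_succ, Fin.sum_univ_succ, h01]
        ring
      set s := min (a + b) (W + T) with hsdef
      have hs0 : 0 ≤ s := le_min (by linarith [hr 0, hr 1]) (by linarith)
      have hs_ab : s ≤ a + b := min_le_left _ _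
      have hs_WT : s ≤ W + T := min_le_right _ _
      set r' : Fin (k' + 1) → ℝ := Fin.cons s rest with hr'
      have hsum' : ∑ i, r' i = s + T := by
        rw [Fin.sum_univ_succ]
        simp [hr']
        exact hT.symm
      have hr'nonneg : ∀ i, 0 ≤ r' i := by
        intro i
        refine Fin.cases ?_ ?_ i
        · simpa [hr'] using hs0
        · intro j; simpa [hr'] using hr j.succ.succ
      have hle' : W ≤ ∑ i, r' i := by
        rw [hsum']
        have h1 : W - T ≤ a + b := by rw [hsum] at hle; linarith
        have h2 : W - T ≤ W + T := by linarith
        have := le_min h1 h2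
        linarith
      have hineq' : ∀ i, 2 * r' i ≤ W + ∑ i, r' i := by
        intro i
        rw [hsum']
        refine Fin.cases ?_ ?_ i
        · simp only [hr', Fin.cons_zero]; linarith
        · intro j
          simp only [hr', Fin.cons_succ]
          rcases min_cases (a + b) (W + T) with ⟨h, _⟩ | ⟨h, _⟩
          · have := hineq j.succ.succ
            rw [hsum] at this
            rw [← hsdef] at h
            rw [h]
            exact this
          · rw [← hsdef] at h
            have hjT : rest j ≤ T := Finset.single_le_sum (fun j _ => hr j.succ.succ) (mem_univ j)
            rw [h]; linarith
      obtain ⟨ξ', hξ'abs, hξ'sum⟩ := IH r' w hr'nonneg hle' hineq'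
      have habs0 : ‖ξ' 0‖ = s := by rw [hξ'abs 0]; simp [hr']
      have hab_s : |a - b| ≤ s := by
        rw [abs_le]
        constructor
        · have h1 := hineq 1; rw [hsum] at h1
          have : b - a ≤ s := le_min (by linarith [hr 0]) (by linarith)
          linarith
        · have h0 := hineq 0; rw [hsum] at h0
          exact le_min (by linarith [hr 1]) (by linarith)
      obtain ⟨x, y, hxabs, hyabs, hxy⟩ := pair_split a b s (hr 0) (hr 1) hab_s hs_ab (ξ' 0) habs0
      refine ⟨Fin.cons x (Fin.cons y (fun j => ξ' j.succ)), ?_, ?_⟩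
      · intro i
        refine Fin.cases ?_ (fun j => Fin.cases ?_ (fun j' => ?_) j) i
        · simpa using hxabs
        · simpa using hyabs
        · simp only [Fin.cons_succ]
          rw [hξ'abs j'.succ]
          simp [hr', hrest]
      · rw [Fin.sum_univ_succ, Fin.sum_univ_succ]
        simp only [Fin.cons_zero, Fin.cons_succ]
        rw [Fin.sum_univ_succ] at hξ'sum
        rw [← hξ'sum, ← hxy]
        ring

lemma conv_gen {n N : ℕ} (L : Fin N → (Fin n → ℝ) → ℝ)
    (hadd : ∀ k a b, L k (a + b) = L k a + L k b)
    (hsmul : ∀ k (c : ℝ) a, L k (c • a) = c * L k a) :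
    Convex ℝ {v | ∑ k, Real.exp (L k v) < 1} := by
  intro a ha b hb s t hs ht hst
  simp only [Set.mem_setOf_eq] at *
  have hterm : ∀ k : Fin N, Real.exp (L k (s • a + t • b)) ≤
      s * Real.exp (L k a) + t * Real.exp (L k b) := by
    intro k
    have h1 : L k (s • a + t • b) = s * L k a + t * L k b := by
      rw [hadd, hsmul, hsmul]
    rw [h1]
    have := convexOn_exp.2 (Set.mem_univ (L k a)) (Set.mem_univ (L k b)) hs ht hst
    simpa using this
  calc ∑ k, Real.exp (L k (s • a + t • b))
      ≤ ∑ k, (s * Real.exp (L k a) + t * Real.exp (L k b)) :=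
        Finset.sum_le_sum fun k _ => hterm k
    _ = s * (∑ k, Real.exp (L k a)) + t * (∑ k, Real.exp (L k b)) := by
        rw [Finset.sum_add_distrib, Finset.mul_sum, Finset.mul_sum]
    _ < 1 := by
        by_cases hs0 : s = 0
        · have ht1 : t = 1 := by linarith
          rw [hs0, ht1]; simpa using hb
        · have hs' : 0 < s := lt_of_le_of_ne hs (Ne.symm hs0)
          have h1 : s * (∑ k, Real.exp (L k a)) < s * 1 := mul_lt_mul_of_pos_left ha hs'
          have h2 : t * (∑ k, Real.exp (L k b)) ≤ t * 1 := mul_le_mul_of_nonneg_left hb.le ht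
          nlinarith

/-- The complement of the amoeba of the denominator of the Bergman kernel of the complex
ellipsoidal domain `D^{p₁,…,p_n}` has exactly `n + 1` connected components. -/
theorem stmt5 (n : ℕ) (hn : 1 ≤ n) (p : Fin n → ℕ) (hp : ∀ i, 1 ≤ p i)
    (V : Set (Fin n → ℂ))
    (hV : V = {x | (∀ i, x i ≠ 0) ∧
      ∃ ξ : Fin n → ℂ, (∀ i, ξ i ^ p i = x i) ∧ (∑ i, ξ i) = 1})
    (LogV : Set (Fin n → ℝ))
    (hLogV : LogV = {v | ∃ x ∈ V, ∀ i, v i = Real.log ‖x i‖}) :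
    Nat.card (ConnectedComponents {v : Fin n → ℝ // v ∉ LogV}) = n + 1 := by
  classical
  have hq : ∀ i, (0:ℝ) < (p i : ℝ) := fun i => by exact_mod_cast hp i
  set R : (Fin n → ℝ) → Fin n → ℝ := fun v i => Real.exp (v i / (p i : ℝ)) with hR
  set S : (Fin n → ℝ) → ℝ := fun v => ∑ i, R v i with hS
  have hRpos : ∀ v i, 0 < R v i := fun v i => Real.exp_pos _
  have hRleS : ∀ v i, R v i ≤ S v := fun v i =>
    Finset.single_le_sum (fun j _ => (hRpos v j).le) (Finset.mem_univ i)
  have hSsplit : ∀ v i, S v = R v i + ∑ j ∈ Finset.univ.erase i, R v j := fun v i =>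
    (Finset.add_sum_erase _ _ (Finset.mem_univ i)).symm
  -- membership characterization
  have hmem : ∀ v, v ∈ LogV ↔ (1 ≤ S v ∧ ∀ i, 2 * R v i ≤ 1 + S v) := by
    intro v
    constructor
    · intro hv
      rw [hLogV] at hv
      obtain ⟨x, hxV, hvx⟩ := hv
      rw [hV] at hxV
      obtain ⟨hx0, ξ, hξp, hξs⟩ := hxV
      have hξ0 : ∀ i, ξ i ≠ 0 := by
        intro i h
        apply hx0 i
        rw [← hξp i, h]
        exact zero_pow (by have := hp i; omega)
      have hRv : ∀ i, R v i = ‖ξ i‖ := by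
        intro i
        have h1 : ‖x i‖ = ‖ξ i‖ ^ (p i) := by rw [← hξp i, norm_pow]
        have h2 : v i = (p i : ℝ) * Real.log (‖ξ i‖) := by
          rw [hvx i, h1, Real.log_pow]
        have h3 : v i / (p i : ℝ) = Real.log (‖ξ i‖) := by
          rw [h2, mul_div_cancel_left₀ _ (hq i).ne']
        show Real.exp _ = _
        rw [h3, Real.exp_log (norm_pos_iff.mpr (hξ0 i))]
      constructor
      · calc (1:ℝ) = ‖(1:ℂ)‖ := by simp
          _ = ‖∑ i, ξ i‖ := by rw [hξs]
          _ ≤ ∑ i, ‖ξ i‖ := norm_sum_le _ _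
          _ = S v := (Finset.sum_congr rfl fun i _ => (hRv i).symm)
      · intro i
        have hsplit : ∑ j, ξ j = ξ i + ∑ j ∈ Finset.univ.erase i, ξ j :=
          (Finset.add_sum_erase _ _ (Finset.mem_univ i)).symm
        have hxi : ξ i = 1 - ∑ j ∈ Finset.univ.erase i, ξ j := by
          rw [← hξs, hsplit]; ring
        have h4 : ‖ξ i‖ ≤ 1 + ∑ j ∈ Finset.univ.erase i, ‖ξ j‖ := by
          rw [hxi]
          calc ‖1 - ∑ j ∈ Finset.univ.erase i, ξ j‖
              ≤ ‖(1:ℂ)‖ + ‖∑ j ∈ Finset.univ.erase i, ξ j‖ := by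
                rw [sub_eq_add_neg]
                exact le_trans (norm_add_le _ _) (by rw [norm_neg])
            _ ≤ 1 + ∑ j ∈ Finset.univ.erase i, ‖ξ j‖ := by
                rw [norm_one]
                exact add_le_add le_rfl (norm_sum_le _ _)
        have h5 : ∑ j ∈ Finset.univ.erase i, ‖ξ j‖
            = ∑ j ∈ Finset.univ.erase i, R v j :=
          Finset.sum_congr rfl fun j _ => (hRv j).symm
        have h6 := hSsplit v i
        rw [h5] at h4
        linarith [hRv i]
    · rintro ⟨h1, h2⟩
      obtain ⟨ξ, hξabs, hξsum⟩ := polygon n (R v) 1 (fun i => (hRpos v i).le)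
        (by rw [norm_one]; exact h1) (by intro i; rw [norm_one]; exact h2 i)
      have hξ0 : ∀ i, ξ i ≠ 0 := by
        intro i h
        have := hξabs i
        rw [h, norm_zero] at this
        exact absurd this.symm (hRpos v i).ne'
      rw [hLogV]
      refine ⟨fun i => ξ i ^ p i, ?_, ?_⟩
      · rw [hV]
        exact ⟨fun i => pow_ne_zero _ (hξ0 i), ξ, fun i => rfl, hξsum⟩
      · intro i
        rw [norm_pow, hξabs i]
        show v i = Real.log ((Real.exp (v i / (p i : ℝ))) ^ (p i))
        have hcan : (p i : ℝ) * (v i / (p i : ℝ)) = v i := by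
          rw [mul_comm]; exact div_mul_cancel₀ _ (hq i).ne'
        rw [← Real.exp_nat_mul, hcan, Real.log_exp]
  have hnot : ∀ v, v ∉ LogV ↔ (S v < 1 ∨ ∃ i, 1 + S v < 2 * R v i) := by
    intro v
    rw [hmem v]
    simp only [not_and_or, not_le, not_forall]
  have huniq : ∀ v (i j : Fin n), 1 + S v < 2 * R v i → 1 + S v < 2 * R v j → i = j := by
    intro v i j hi hj
    by_contra hne
    have hsum2 : R v i + R v j ≤ S v := by
      have hpair : R v i + R v j = ∑ k ∈ ({i, j} : Finset (Fin n)), R v k := by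
        rw [Finset.sum_insert (by simpa using hne), Finset.sum_singleton]
      rw [hpair]
      exact Finset.sum_le_sum_of_subset_of_nonneg (Finset.subset_univ _)
        (fun k _ _ => (hRpos v k).le)
    linarith
  have hdisj0 : ∀ v (i : Fin n), S v < 1 → ¬(1 + S v < 2 * R v i) := by
    intro v i h hc
    have := hRleS v i
    linarith
  set Φ : (Fin n → ℝ) → Option (Fin n) :=
    fun v => if h : ∃ i, 1 + S v < 2 * R v i then some h.choose else none with hΦ
  have hΦsome : ∀ v i, Φ v = some i ↔ 1 + S v < 2 * R v i := by
    intro v i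
    rw [hΦ]
    dsimp only
    by_cases hex : ∃ j, 1 + S v < 2 * R v j
    · rw [dif_pos hex]
      constructor
      · intro h
        have hch := hex.choose_spec
        rwa [Option.some_inj.mp h] at hch
      · intro hi
        rw [huniq v _ i hex.choose_spec hi]
    · rw [dif_neg hex]
      simp only [reduceCtorEq, false_iff]
      exact fun h => hex ⟨i, h⟩
  have hΦnone : ∀ v, v ∉ LogV → (Φ v = none ↔ S v < 1) := by
    intro v hv
    rw [hΦ]
    dsimp only
    by_cases hex : ∃ j, 1 + S v < 2 * R v j
    · rw [dif_pos hex]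
      have hns : ¬ S v < 1 := fun hlt => hdisj0 v hex.choose hlt hex.choose_spec
      simp [hns]
    · rw [dif_neg hex]
      simp only [true_iff]
      rcases (hnot v).mp hv with h | h
      · exact h
      · exact absurd h hex
  -- continuity
  have hContR : ∀ i, Continuous fun v : Fin n → ℝ => R v i := fun i =>
    Real.continuous_exp.comp ((continuous_apply i).div_const _)
  have hContS : Continuous S := continuous_finset_sum _ fun i _ => hContR i
  set F : {v : Fin n → ℝ // v ∉ LogV} → Option (Fin n) := fun v => Φ v.1 with hF
  have hfib : ∀ k : Option (Fin n), IsOpen (F ⁻¹' {k}) := by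
    intro k
    match k with
    | none =>
      have heq : F ⁻¹' {none} =
          (fun v : {v : Fin n → ℝ // v ∉ LogV} => S v.1) ⁻¹' Set.Iio 1 := by
        ext v
        simp only [Set.mem_preimage, Set.mem_singleton_iff, Set.mem_Iio]
        exact hΦnone v.1 v.2
      rw [heq]
      exact (hContS.comp continuous_subtype_val).isOpen_preimage _ isOpen_Iio
    | some i =>
      have heq : F ⁻¹' {some i} =
          (fun v : {v : Fin n → ℝ // v ∉ LogV} => 2 * R v.1 i - (1 + S v.1)) ⁻¹'
            Set.Ioi 0 := by
        ext v
        simp only [Set.mem_preimage, Set.mem_singleton_iff, Set.mem_Ioi]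
        rw [show F v = Φ v.1 from rfl, hΦsome]
        constructor <;> intro <;> linarith
      rw [heq]
      refine Continuous.isOpen_preimage ?_ _ isOpen_Ioi
      exact (continuous_const.mul ((hContR i).comp continuous_subtype_val)).sub
        (continuous_const.add (hContS.comp continuous_subtype_val))
  have hlc : IsLocallyConstant F := by
    intro s
    have heq : F ⁻¹' s = ⋃ k ∈ s, F ⁻¹' {k} := by
      ext v; simp
    rw [heq]
    exact isOpen_biUnion fun k _ => hfib k
  have hconst : ∀ a b : {v : Fin n → ℝ // v ∉ LogV},
      connectedComponent a = connectedComponent b → F a = F b := by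
    intro a b h
    exact hlc.apply_eq_of_isPreconnected isPreconnected_connectedComponent
      mem_connectedComponent (h ▸ mem_connectedComponent)
  set G : ConnectedComponents {v : Fin n → ℝ // v ∉ LogV} → Option (Fin n) :=
    fun c => Quotient.liftOn' c F hconst with hG
  have hGmk : ∀ x : {v : Fin n → ℝ // v ∉ LogV}, G (ConnectedComponents.mk x) = F x :=
    fun x => rfl
  -- convex pieces and injectivity
  have hinj : Function.Injective G := by
    rintro c1 c2 h
    obtain ⟨a, rfl⟩ := ConnectedComponents.surjective_coe c1
    obtain ⟨b, rfl⟩ := ConnectedComponents.surjective_coe c2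
    rw [hGmk, hGmk] at h
    apply ConnectedComponents.coe_eq_coe.mpr
    have hsame : ∀ (C : Set (Fin n → ℝ)), Convex ℝ C → (∀ v ∈ C, v ∉ LogV) →
        a.1 ∈ C → b.1 ∈ C → connectedComponent a = connectedComponent b := by
      intro C hconv hsub ha hb
      have hpre : IsPreconnected
          (Subtype.val ⁻¹' C : Set {v : Fin n → ℝ // v ∉ LogV}) := by
        have himg : Subtype.val '' (Subtype.val ⁻¹' C : Set {v : Fin n → ℝ // v ∉ LogV})
            = C := by
          ext u
          constructor
          · rintro ⟨w, hw, rfl⟩; exact hw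
          · intro hu; exact ⟨⟨u, hsub u hu⟩, hu, rfl⟩
        have h2 : IsPreconnected
            (Subtype.val '' (Subtype.val ⁻¹' C : Set {v : Fin n → ℝ // v ∉ LogV})) := by
          rw [himg]; exact hconv.isPreconnected
        exact Topology.IsInducing.subtypeVal.isPreconnected_image.mp h2
      have h1 := hpre.subset_connectedComponent (show a ∈ _ from ha)
      exact connectedComponent_eq (h1 (show b ∈ _ from hb))
    have hCi : ∀ i : Fin n, Convex ℝ {v : Fin n → ℝ | 1 + S v < 2 * R v i} := by
      intro i
      have hconv := conv_gen (n := n) (N := n)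
        (fun j v => (if j = i then 0 else v j / (p j : ℝ)) - v i / (p i : ℝ))
        (fun j a b => by
          by_cases hj : j = i <;> simp [hj, Pi.add_apply, add_div] <;> ring)
        (fun j c a => by
          by_cases hj : j = i <;>
            simp [hj, Pi.smul_apply, smul_eq_mul, mul_div_assoc] <;> ring)
      have hset : {v : Fin n → ℝ |
            ∑ j, Real.exp ((if j = i then 0 else v j / (p j : ℝ)) - v i / (p i : ℝ)) < 1}
          = {v : Fin n → ℝ | 1 + S v < 2 * R v i} := by
        ext v
        simp only [Set.mem_setOf_eq]
        have hterm : ∀ j, Real.exp ((if j = i then 0 else v j / (p j : ℝ)) - v i / (p i : ℝ))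
            = (if j = i then 1 else R v j) * (R v i)⁻¹ := by
          intro j
          by_cases hj : j = i
          · rw [if_pos hj, if_pos hj, zero_sub, Real.exp_neg, one_mul]
            try rfl
          · rw [if_neg hj, if_neg hj, Real.exp_sub, div_eq_mul_inv]
            try rfl
        rw [Finset.sum_congr rfl fun j _ => hterm j, ← Finset.sum_mul]
        have hsum1 : ∑ j, (if j = i then (1:ℝ) else R v j) = 1 + (S v - R v i) := by
          have e0 : ∀ j, (if j = i then (1:ℝ) else R v j)
              = R v j + (if j = i then 1 - R v i else 0) := by
            intro j
            by_cases hj : j = i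
            · rw [if_pos hj, if_pos hj, hj]; ring
            · rw [if_neg hj, if_neg hj]; ring
          rw [Finset.sum_congr rfl fun j _ => e0 j, Finset.sum_add_distrib,
            Finset.sum_ite_eq' Finset.univ i (fun _ => 1 - R v i)]
          simp only [Finset.mem_univ, if_true]
          ring
        rw [hsum1, ← div_eq_mul_inv, div_lt_one (hRpos v i)]
        constructor <;> intro <;> linarith
      exact hset ▸ hconv
    cases hk : F a with
    | none =>
      exact hsame {v : Fin n → ℝ | S v < 1}
        (conv_gen (n := n) (N := n) (fun k v => v k / (p k : ℝ))
          (fun k a b => by simp [Pi.add_apply, add_div])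
          (fun k c a => by simp [Pi.smul_apply, smul_eq_mul, mul_div_assoc]))
        (fun v hv => (hnot v).mpr (Or.inl hv))
        ((hΦnone a.1 a.2).mp hk) ((hΦnone b.1 b.2).mp (h.symm.trans hk))
    | some i =>
      exact hsame {v : Fin n → ℝ | 1 + S v < 2 * R v i} (hCi i)
        (fun v hv => (hnot v).mpr (Or.inr ⟨i, hv⟩))
        ((hΦsome a.1 i).mp hk) ((hΦsome b.1 i).mp (h.symm.trans hk))
  have hsurj : Function.Surjective G := by
    have hn' : (1:ℝ) ≤ (n:ℝ) := by exact_mod_cast hn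
    have hcpos : (0:ℝ) < 1 / (2 * (n:ℝ)) := by positivity
    have hnc : (n:ℝ) * (1 / (2 * (n:ℝ))) = 1/2 := by
      field_simp
    intro k
    cases k with
    | none =>
      set v0 : Fin n → ℝ := fun j => (p j : ℝ) * Real.log (1 / (2 * (n:ℝ))) with hv0
      have hRv0 : ∀ j, R v0 j = 1 / (2 * (n:ℝ)) := by
        intro j
        show Real.exp ((p j : ℝ) * Real.log (1 / (2 * (n:ℝ))) / (p j : ℝ)) = _
        rw [mul_div_cancel_left₀ _ (hq j).ne', Real.exp_log hcpos]
      have hSv0 : S v0 = 1 / 2 := by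
        calc S v0 = ∑ j : Fin n, 1 / (2 * (n:ℝ)) :=
              Finset.sum_congr rfl fun j _ => hRv0 j
          _ = (n:ℝ) * (1 / (2 * (n:ℝ))) := by
              rw [Finset.sum_const, Finset.card_univ, Fintype.card_fin, nsmul_eq_mul]
          _ = 1/2 := hnc
      have hv0not : v0 ∉ LogV := (hnot v0).mpr (Or.inl (by rw [hSv0]; norm_num))
      refine ⟨ConnectedComponents.mk ⟨v0, hv0not⟩, ?_⟩
      rw [hGmk]
      show Φ v0 = none
      exact (hΦnone v0 hv0not).mpr (by rw [hSv0]; norm_num)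
    | some i =>
      have hdpos : (0:ℝ) < 2 * (n:ℝ) + 2 := by positivity
      set vi : Fin n → ℝ := fun j => if j = i then (p j : ℝ) * Real.log (2 * (n:ℝ) + 2)
        else (p j : ℝ) * Real.log (1 / (2 * (n:ℝ))) with hvi
      have hRvi : ∀ j, R vi j
          = if j = i then 2 * (n:ℝ) + 2 else 1 / (2 * (n:ℝ)) := by
        intro j
        by_cases hj : j = i
        · rw [if_pos hj]
          show Real.exp ((if j = i then (p j : ℝ) * Real.log (2 * (n:ℝ) + 2)
            else (p j : ℝ) * Real.log (1 / (2 * (n:ℝ)))) / (p j : ℝ)) = _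
          rw [if_pos hj, mul_div_cancel_left₀ _ (hq j).ne', Real.exp_log hdpos]
        · rw [if_neg hj]
          show Real.exp ((if j = i then (p j : ℝ) * Real.log (2 * (n:ℝ) + 2)
            else (p j : ℝ) * Real.log (1 / (2 * (n:ℝ)))) / (p j : ℝ)) = _
          rw [if_neg hj, mul_div_cancel_left₀ _ (hq j).ne', Real.exp_log hcpos]
      have hRi : R vi i = 2 * (n:ℝ) + 2 := by rw [hRvi i, if_pos rfl]
      have herase : ∑ j ∈ Finset.univ.erase i, R vi j ≤ 1/2 := by
        have hterm : ∀ j ∈ Finset.univ.erase i, R vi j = 1 / (2 * (n:ℝ)) :=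
          fun j hj => by rw [hRvi j, if_neg (Finset.ne_of_mem_erase hj)]
        rw [Finset.sum_congr rfl hterm, Finset.sum_const, nsmul_eq_mul]
        calc ((Finset.univ.erase i).card : ℝ) * (1 / (2 * (n:ℝ)))
            ≤ (n:ℝ) * (1 / (2 * (n:ℝ))) := by
              apply mul_le_mul_of_nonneg_right _ hcpos.le
              have hcard : (Finset.univ.erase i).card ≤ n := by
                calc (Finset.univ.erase i).card ≤ Finset.univ.card :=
                      Finset.card_le_card (Finset.erase_subset _ _)
                  _ = n := by rw [Finset.card_univ, Fintype.card_fin]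
              exact_mod_cast hcard
          _ = 1/2 := hnc
      have key : 1 + S vi < 2 * R vi i := by
        have hS' := hSsplit vi i
        rw [hRi] at hS' ⊢
        linarith
      have hvinot : vi ∉ LogV := (hnot vi).mpr (Or.inr ⟨i, key⟩)
      refine ⟨ConnectedComponents.mk ⟨vi, hvinot⟩, ?_⟩
      rw [hGmk]
      show Φ vi = some i
      exact (hΦsome vi i).mpr key
  rw [Nat.card_eq_of_bijective G ⟨hinj, hsurj⟩]
  simp [Nat.card_eq_fintype_card]
end

section
/- Let P_1,…,P_n, Q_1,…,Q_n ∈ ℂ[s_1,…,s_n] and γ ∈ ℂ^n, and assume the compatibility identities P_i(s)·P_j(s+e_i)·Q_j(s+e_j)·Q_i(s+e_i+e_j) = P_j(s)·P_i(s+e_j)·Q_i(s+e_i)·Q_j(s+e_i+e_j) hold identically in s for all i, j. Let S ⊆ ℤ^n be such that for every s ∈ S and every i: P_i(s+γ) ≠ 0 or Q_i(s+γ+e_i) ≠ 0. Define S_i' = {s ∈ S : s+e_i ∉ S} and S_i'' = {s ∉ S : s+e_i ∈ S}. Then there exists a function φ : ℤ^n → ℂ with {s ∈ ℤ^n : φ(s)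 ≠ 0} = S satisfying φ(s+e_i)·Q_i(s+γ+e_i) = φ(s)·P_i(s+γ) for all s ∈ ℤ^n and all i = 1,…,n, if and only if the following conditions hold for every i = 1,…,n: P_i(s+γ) = 0 for all s ∈ S_i'; Q_i(s+γ+e_i) = 0 for all s ∈ S_i''; P_i(s+γ) ≠ 0 for all s ∈ S ∖ S_i'; and Q_i(s+γ+e_i) ≠ 0 for all s ∈ S. -/
open MvPolynomial

set_option synthInstance.maxHeartbeats 1000000
set_option maxHeartbeats 1000000

noncomputable section Sadykov

variable {n : ℕ}

abbrev RR (n : ℕ) := MvPolynomial (Fin n) ℂ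
abbrev KK (n : ℕ) := FractionRing (RR n)

/-- Translation by `v` as an algebra hom on polynomials. -/
def trA (v : Fin n → ℂ) : RR n →ₐ[ℂ] RR n := aeval fun i => X i + C (v i)

lemma eval_trA (v x : Fin n → ℂ) (p : RR n) : eval x (trA v p) = eval (x + v) p := by
  induction p using MvPolynomial.induction_on with
  | C a => simp [trA]
  | add p q hp hq => simp [hp, hq]
  | mul_X p i hp =>
    rw [map_mul, eval_mul, hp, eval_mul]
    congr 1
    simp [trA]

lemma trA_trA (v w : Fin n → ℂ) (p : RR n) : trA v (trA w p) = trA (v + w) p := by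
  induction p using MvPolynomial.induction_on with
  | C a => simp [trA]
  | add p q hp hq => simp [hp, hq]
  | mul_X p i hp =>
    rw [map_mul, map_mul, hp, map_mul]
    congr 1
    simp only [trA, aeval_X, map_add, aeval_C, Pi.add_apply, algebraMap_eq, C_add]
    ring

lemma trA_zero (p : RR n) : trA 0 p = p := by
  induction p using MvPolynomial.induction_on with
  | C a => simp [trA]
  | add p q hp hq => simp [hp, hq]
  | mul_X p i hp => simp [trA, hp]

lemma trA_injective (v : Fin n → ℂ) : Function.Injective (trA (n := n) v) := by
  intro p q h
  have := congrArg (trA (-v)) h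
  rwa [trA_trA, trA_trA, neg_add_cancel, trA_zero, trA_zero] at this

lemma trA_ne_zero (v : Fin n → ℂ) {p : RR n} (hp : p ≠ 0) : trA v p ≠ 0 := by
  intro h
  exact hp (trA_injective v (by simpa using h))

/-- Translation as a ring equiv on polynomials. -/
def trE (v : Fin n → ℂ) : RR n ≃+* RR n :=
  RingEquiv.ofRingHom (trA v : RR n →+* RR n) (trA (-v) : RR n →+* RR n)
    (RingHom.ext fun p => by
      simp [RingHom.comp_apply, trA_trA, trA_zero])
    (RingHom.ext fun p => by
      simp [RingHom.comp_apply, trA_trA, trA_zero])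

@[simp] lemma trE_apply (v : Fin n → ℂ) (p : RR n) : trE v p = trA v p := rfl

/-- Translation as a field automorphism of the rational function field. -/
def trK (v : Fin n → ℂ) : KK n ≃+* KK n :=
  IsFractionRing.ringEquivOfRingEquiv (trE v)

lemma trK_algebraMap (v : Fin n → ℂ) (p : RR n) :
    trK v (algebraMap (RR n) (KK n) p) = algebraMap (RR n) (KK n) (trA v p) := by
  simp [trK]


lemma trK_trK (v w : Fin n → ℂ) (z : KK n) : trK v (trK w z) = trK (v + w) z := by
  have : ((trK v : KK n →+* KK n).comp (trK w : KK n →+* KK n)) = (trK (v + w) : KK n →+* KK n) := by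
    apply IsLocalization.ringHom_ext (nonZeroDivisors (RR n))
    refine RingHom.ext fun p => ?_
    simp [RingHom.comp_apply, trK_algebraMap, trA_trA]
  exact congrArg (fun f : KK n →+* KK n => f z) this

lemma trK_zero (z : KK n) : trK (0 : Fin n → ℂ) z = z := by
  have : (trK (0 : Fin n → ℂ) : KK n →+* KK n) = RingHom.id (KK n) := by
    apply IsLocalization.ringHom_ext (nonZeroDivisors (RR n))
    refine RingHom.ext fun p => ?_
    simp [RingHom.comp_apply, trK_algebraMap, trA_zero]
  exact congrArg (fun f : KK n →+* KK n => f z) this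

/-- Translation as an automorphism of the unit group of the rational function field. -/
def trU (v : Fin n → ℂ) : MulAut (KK n)ˣ := Units.mapEquiv (trK v).toMulEquiv

lemma trU_coe (v : Fin n → ℂ) (u : (KK n)ˣ) : ((trU v u : (KK n)ˣ) : KK n) = trK v u := rfl

/-- The translation action of the lattice on the units of the rational function field. -/
def actH : (Fin n → Multiplicative ℤ) →* MulAut (KK n)ˣ where
  toFun a := trU fun j => ((a j).toAdd : ℂ)
  map_one' := by
    refine MulEquiv.ext fun u => Units.ext ?_
    show trK (fun j => (((1 : Fin n → Multiplicative ℤ) j).toAdd : ℂ)) (u : KK n) = (u : KK n)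
    rw [show (fun j => (((1 : Fin n → Multiplicative ℤ) j).toAdd : ℂ)) = (0 : Fin n → ℂ) from
      funext fun j => by simp]
    exact trK_zero _
  map_mul' a b := by
    refine MulEquiv.ext fun u => Units.ext ?_
    show trK (fun j => (((a * b) j).toAdd : ℂ)) (u : KK n)
      = trK (fun j => ((a j).toAdd : ℂ)) (trK (fun j => ((b j).toAdd : ℂ)) (u : KK n))
    rw [trK_trK,
      show ((fun j => ((a j).toAdd : ℂ)) + fun j => ((b j).toAdd : ℂ))
          = (fun j => (((a * b) j).toAdd : ℂ)) from funext fun j => by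
        simp [toAdd_mul]]

abbrev WW (n : ℕ) := SemidirectProduct ((KK n)ˣ) (Fin n → Multiplicative ℤ) actH


section Val

/-- `u` is a rational function defined and nonvanishing at `x`, with value `c`. -/
def Val (x : Fin n → ℂ) (u : (KK n)ˣ) (c : ℂ) : Prop :=
  ∃ p q : RR n, eval x p ≠ 0 ∧ eval x q ≠ 0 ∧
    (u : KK n) * algebraMap (RR n) (KK n) q = algebraMap (RR n) (KK n) p ∧
    c = eval x p / eval x q

lemma Val.ne_zero {x : Fin n → ℂ} {u : (KK n)ˣ} {c : ℂ} (h : Val x u c) : c ≠ 0 := by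
  obtain ⟨p, q, hp, hq, _, hc⟩ := h
  rw [hc]
  exact div_ne_zero hp hq

lemma Val_one (x : Fin n → ℂ) : Val x (1 : (KK n)ˣ) 1 :=
  ⟨1, 1, by simp, by simp, by simp, by simp⟩

lemma Val.mul {x : Fin n → ℂ} {u u' : (KK n)ˣ} {c c' : ℂ}
    (h : Val x u c) (h' : Val x u' c') : Val x (u * u') (c * c') := by
  obtain ⟨p, q, hp, hq, he, hc⟩ := h
  obtain ⟨p', q', hp', hq', he', hc'⟩ := h'
  refine ⟨p * p', q * q', by simp [hp, hp'], by simp [hq, hq'], ?_, ?_⟩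
  · push_cast [map_mul]
    calc (u : KK n) * (u' : KK n) * (algebraMap (RR n) (KK n) q * algebraMap (RR n) (KK n) q')
        = ((u : KK n) * algebraMap (RR n) (KK n) q) *
          ((u' : KK n) * algebraMap (RR n) (KK n) q') := by ring
      _ = _ := by rw [he, he']
  · rw [hc, hc']
    simp only [map_mul]
    field_simp

lemma Val.inv {x : Fin n → ℂ} {u : (KK n)ˣ} {c : ℂ} (h : Val x u c) : Val x u⁻¹ c⁻¹ := by
  obtain ⟨p, q, hp, hq, he, hc⟩ := h
  refine ⟨q, p, hq, hp, ?_, by rw [hc]; simp⟩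
  have := congrArg (fun z => (↑u⁻¹ : KK n) * z) he.symm
  simpa [mul_comm, mul_assoc, mul_left_comm] using this

lemma Val.unique {x : Fin n → ℂ} {u : (KK n)ˣ} {c c' : ℂ}
    (h : Val x u c) (h' : Val x u c') : c = c' := by
  obtain ⟨p, q, hp, hq, he, hc⟩ := h
  obtain ⟨p', q', hp', hq', he', hc'⟩ := h'
  have hK : algebraMap (RR n) (KK n) (p * q') = algebraMap (RR n) (KK n) (p' * q) := by
    push_cast [map_mul]
    rw [← he, ← he']
    ring
  have hR : p * q' = p' * q := IsFractionRing.injective (RR n) (KK n) hK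
  have := congrArg (eval x) hR
  simp only [map_mul] at this
  rw [hc, hc']
  rw [div_eq_div_iff hq hq']
  linear_combination this

lemma Val.shift {v x : Fin n → ℂ} {u : (KK n)ˣ} {c : ℂ}
    (h : Val (x + v) u c) : Val x (trU v u) c := by
  obtain ⟨p, q, hp, hq, he, hc⟩ := h
  refine ⟨trA v p, trA v q, by rwa [eval_trA], by rwa [eval_trA], ?_, by
    rw [hc, eval_trA, eval_trA]⟩
  have := congrArg (trK v) he
  rw [map_mul, trK_algebraMap, trK_algebraMap] at this
  exact this

end Val


section Gen

/-- integer lattice vector as complex vector -/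
def cz (a : Fin n → ℤ) : Fin n → ℂ := fun j => (a j : ℂ)

lemma cz_add (a b : Fin n → ℤ) : cz (a + b) = cz a + cz b := by
  funext j; simp [cz]

lemma cz_zero : cz (0 : Fin n → ℤ) = 0 := by funext j; simp [cz]

lemma cz_single (i : Fin n) : cz (Pi.single i 1) = Pi.single i 1 := by
  funext j
  rcases eq_or_ne j i with rfl | hj
  · simp [cz]
  · simp [cz, Pi.single_apply, hj]

def toMulV (a : Fin n → ℤ) : Fin n → Multiplicative ℤ := fun j => Multiplicative.ofAdd (a j)

lemma toMulV_add (a b : Fin n → ℤ) : toMulV (a + b) = toMulV a * toMulV b := rfl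

variable (P Q : Fin n → RR n)

def runitK (i : Fin n) : KK n :=
  algebraMap (RR n) (KK n) (P i) /
    algebraMap (RR n) (KK n) (trA (Pi.single i (1:ℂ)) (Q i))

lemma algMap_ne_zero {p : RR n} (hp : p ≠ 0) : algebraMap (RR n) (KK n) p ≠ 0 := by
  intro h
  exact hp (IsFractionRing.injective (RR n) (KK n) (by simpa using h))

lemma runitK_ne_zero {i : Fin n} (hP : P i ≠ 0) (hQ : Q i ≠ 0) : runitK P Q i ≠ 0 :=
  div_ne_zero (algMap_ne_zero hP) (algMap_ne_zero (trA_ne_zero _ hQ))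

variable (hQ : ∀ i, Q i ≠ 0)

def gW (i : Fin n) : WW n :=
  if hP : P i = 0 then 1
  else ⟨Units.mk0 (runitK P Q i) (runitK_ne_zero P Q hP (hQ i)), toMulV (Pi.single i 1)⟩

lemma actH_toMulV (a : Fin n → ℤ) (u : (KK n)ˣ) :
    ((actH (toMulV a) u : (KK n)ˣ) : KK n) = trK (cz a) (u : KK n) := rfl

lemma gW_eq {i : Fin n} (hP : P i ≠ 0) :
    gW P Q hQ i = ⟨Units.mk0 (runitK P Q i) (runitK_ne_zero P Q hP (hQ i)),
      toMulV (Pi.single i 1)⟩ := dif_neg hP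

lemma gW_commute
    (hpoly : ∀ i j, P i * trA (Pi.single i 1) (P j) * trA (Pi.single j 1) (Q j) *
          trA (Pi.single i (1:ℂ) + Pi.single j 1) (Q i)
        = P j * trA (Pi.single j 1) (P i) * trA (Pi.single i 1) (Q i) *
          trA (Pi.single i (1:ℂ) + Pi.single j 1) (Q j))
    (i j : Fin n) : Commute (gW P Q hQ i) (gW P Q hQ j) := by
  rcases eq_or_ne (P i) 0 with hPi | hPi
  · rw [show gW P Q hQ i = 1 from dif_pos hPi]; exact Commute.one_left _
  rcases eq_or_ne (P j) 0 with hPj | hPj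
  · rw [show gW P Q hQ j = 1 from dif_pos hPj]; exact Commute.one_right _
  show _ * _ = _ * _
  rw [gW_eq P Q hQ hPi, gW_eq P Q hQ hPj]
  apply SemidirectProduct.ext
  · -- left components
    simp only [SemidirectProduct.mul_left]
    apply Units.ext
    push_cast [Units.val_mul]
    rw [actH_toMulV, actH_toMulV, cz_single, cz_single]
    simp only [runitK, Units.val_mk0, map_div₀, trK_algebraMap, trA_trA]
    rw [div_mul_div_comm, div_mul_div_comm,
      div_eq_div_iff
        (mul_ne_zero (algMap_ne_zero (trA_ne_zero _ (hQ i)))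
          (algMap_ne_zero (trA_ne_zero _ (hQ j))))
        (mul_ne_zero (algMap_ne_zero (trA_ne_zero _ (hQ j)))
          (algMap_ne_zero (trA_ne_zero _ (hQ i))))]
    rw [add_comm (Pi.single j 1 : Fin n → ℂ) (Pi.single i 1 : Fin n → ℂ)]
    have := congrArg (algebraMap (RR n) (KK n)) (hpoly i j)
    simp only [map_mul] at this
    linear_combination this
  · -- right components
    simp only [SemidirectProduct.mul_right]
    funext j'
    exact mul_comm _ _

def psiH (hcomm : ∀ i j, Commute (gW P Q hQ i) (gW P Q hQ j)) :
    (Fin n → Multiplicative ℤ) →* WW n :=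
  MonoidHom.noncommPiCoprod (fun i => zpowersHom (WW n) (gW P Q hQ i))
    (by
      intro i j _ x y
      rw [zpowersHom_apply, zpowersHom_apply]
      exact (hcomm i j).zpow_zpow _ _)

lemma psiH_single (hcomm : ∀ i j, Commute (gW P Q hQ i) (gW P Q hQ j)) (i : Fin n) :
    psiH P Q hQ hcomm (toMulV (Pi.single i 1)) = gW P Q hQ i := by
  have h1 : toMulV (Pi.single i (1:ℤ)) = Pi.mulSingle i (Multiplicative.ofAdd (1:ℤ)) := by
    funext j
    rcases eq_or_ne j i with rfl | hj
    · simp [toMulV]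
    · simp [toMulV, Pi.single_apply, Pi.mulSingle_apply, hj]
  rw [psiH, h1]
  refine (MonoidHom.noncommPiCoprod_mulSingle ..).trans ?_
  rw [zpowersHom_apply, toAdd_ofAdd, zpow_one]

lemma actH_eq_trU (a : Fin n → ℤ) : actH (toMulV a) = trU (cz a) := rfl

lemma toMulV_zero : toMulV (0 : Fin n → ℤ) = 1 := rfl

end Gen

section Main

variable {P Q : Fin n → RR n} {γ : Fin n → ℂ} {S : Set (Fin n → ℤ)}

theorem exists_phi
    (hpoly : ∀ i j, P i * trA (Pi.single i 1) (P j) * trA (Pi.single j 1) (Q j) *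
          trA (Pi.single i (1:ℂ) + Pi.single j 1) (Q i)
        = P j * trA (Pi.single j 1) (P i) * trA (Pi.single i 1) (Q i) *
          trA (Pi.single i (1:ℂ) + Pi.single j 1) (Q j))
    (h1 : ∀ i : Fin n, ∀ s ∈ S, s + (Pi.single i 1 : Fin n → ℤ) ∉ S →
      eval (cz s + γ) (P i) = 0)
    (h2 : ∀ i : Fin n, ∀ s ∉ S, s + (Pi.single i 1 : Fin n → ℤ) ∈ S →
      eval (cz s + γ + Pi.single i 1) (Q i) = 0)
    (h3 : ∀ i : Fin n, ∀ s ∈ S, s + (Pi.single i 1 : Fin n → ℤ) ∈ S →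
      eval (cz s + γ) (P i) ≠ 0)
    (h4 : ∀ i : Fin n, ∀ s ∈ S, eval (cz s + γ + Pi.single i 1) (Q i) ≠ 0) :
    ∃ φ : (Fin n → ℤ) → ℂ, {s | φ s ≠ 0} = S ∧
      ∀ (s : Fin n → ℤ) (i : Fin n),
        φ (s + Pi.single i 1) * eval (cz s + γ + Pi.single i 1) (Q i)
          = φ s * eval (cz s + γ) (P i) := by
  classical
  rcases S.eq_empty_or_nonempty with rfl | ⟨s₀, hs₀⟩
  · exact ⟨fun _ => 0, by simp, by simp⟩
  have hQ : ∀ i, Q i ≠ 0 := by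
    intro i h
    exact h4 i s₀ hs₀ (by simp [h])
  have hcomm := gW_commute P Q hQ hpoly
  set Ψ := psiH P Q hQ hcomm with hΨ
  set ρ : (Fin n → ℤ) → (KK n)ˣ := fun a => (Ψ (toMulV a)).left with hρ
  -- the one-step value lemma
  have valStep : ∀ (β t : Fin n → ℤ) (i : Fin n), t ∈ S →
      t + (Pi.single i 1 : Fin n → ℤ) ∈ S →
      ∀ u : (KK n)ˣ, (u : KK n) = runitK P Q i →
      Val (cz β + γ) (actH (toMulV (t - β)) u)
        (eval (cz t + γ) (P i) / eval (cz t + γ + Pi.single i 1) (Q i)) := by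
    intro β t i ht ht' u hu
    have hx : (cz β + γ) + cz (t - β) = cz t + γ := by
      funext j; simp [cz]; ring
    have hbase : Val (cz t + γ) u
        (eval (cz t + γ) (P i) / eval (cz t + γ + Pi.single i 1) (Q i)) := by
      refine ⟨P i, trA (Pi.single i 1) (Q i), h3 i t ht ht', ?_, ?_, ?_⟩
      · rw [eval_trA]; exact h4 i t ht
      · rw [hu, runitK, div_mul_cancel₀]
        exact algMap_ne_zero (trA_ne_zero _ (hQ i))
      · rw [eval_trA]
    rw [actH_eq_trU]
    exact Val.shift (by rwa [hx])
  -- the up-step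
  have stepA : ∀ (β s : Fin n → ℤ) (i : Fin n), s ∈ S →
      s + (Pi.single i 1 : Fin n → ℤ) ∈ S →
      (Ψ (toMulV (s - β))).right = toMulV (s - β) →
      ∀ c : ℂ, Val (cz β + γ) (ρ (s - β)) c →
      (Ψ (toMulV (s + Pi.single i 1 - β))).right = toMulV (s + Pi.single i 1 - β) ∧
      Val (cz β + γ) (ρ (s + Pi.single i 1 - β))
        (c * (eval (cz s + γ) (P i) / eval (cz s + γ + Pi.single i 1) (Q i))) := by
    intro β s i hs ht hr c hc
    have hPi : P i ≠ 0 := by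
      intro h
      exact h3 i s hs ht (by simp [h])
    have hveq : s + (Pi.single i 1 : Fin n → ℤ) - β = (s - β) + Pi.single i 1 := by
      abel
    have hsplit : Ψ (toMulV (s + Pi.single i 1 - β))
        = Ψ (toMulV (s - β)) * gW P Q hQ i := by
      rw [← psiH_single P Q hQ hcomm i, hΨ, ← map_mul, ← toMulV_add, hveq]
    constructor
    · rw [hsplit, SemidirectProduct.mul_right, hr, gW_eq P Q hQ hPi, hveq, toMulV_add]
    · have hleft : ρ (s + Pi.single i 1 - β)
          = ρ (s - β) * actH (toMulV (s - β))
              (Units.mk0 (runitK P Q i) (runitK_ne_zero P Q hPi (hQ i))) := by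
        rw [hρ]
        simp only [hsplit, SemidirectProduct.mul_left, hr, gW_eq P Q hQ hPi]
      rw [hleft]
      exact hc.mul (valStep β s i hs ht _ rfl)
  -- the down-step
  have stepB : ∀ (β t : Fin n → ℤ) (i : Fin n), t ∈ S →
      t + (Pi.single i 1 : Fin n → ℤ) ∈ S →
      (Ψ (toMulV (t + Pi.single i 1 - β))).right = toMulV (t + Pi.single i 1 - β) →
      ∀ c : ℂ, Val (cz β + γ) (ρ (t + Pi.single i 1 - β)) c →
      (Ψ (toMulV (t - β))).right = toMulV (t - β) ∧
      Val (cz β + γ) (ρ (t - β))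
        (c * (eval (cz t + γ) (P i) / eval (cz t + γ + Pi.single i 1) (Q i))⁻¹) := by
    intro β t i ht ht' hr c hc
    have hPi : P i ≠ 0 := by
      intro h
      exact h3 i t ht ht' (by simp [h])
    have hveq : t + (Pi.single i 1 : Fin n → ℤ) - β = (t - β) + Pi.single i 1 := by
      abel
    have hsplit : Ψ (toMulV (t + Pi.single i 1 - β))
        = Ψ (toMulV (t - β)) * gW P Q hQ i := by
      rw [← psiH_single P Q hQ hcomm i, hΨ, ← map_mul, ← toMulV_add, hveq]
    have hright : (Ψ (toMulV (t - β))).right = toMulV (t - β) := by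
      have := hr
      rw [hsplit, SemidirectProduct.mul_right, gW_eq P Q hQ hPi, hveq, toMulV_add] at this
      exact mul_right_cancel this
    refine ⟨hright, ?_⟩
    have hleft : ρ (t + Pi.single i 1 - β)
        = ρ (t - β) * actH (toMulV (t - β))
            (Units.mk0 (runitK P Q i) (runitK_ne_zero P Q hPi (hQ i))) := by
      rw [hρ]
      simp only [hsplit, SemidirectProduct.mul_left, hright, gW_eq P Q hQ hPi]
    have hval := valStep β t i ht ht' _
      (rfl : ((Units.mk0 (runitK P Q i) (runitK_ne_zero P Q hPi (hQ i)) : (KK n)ˣ) : KK n)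
        = runitK P Q i)
    have : ρ (t - β) = ρ (t + Pi.single i 1 - β) *
        (actH (toMulV (t - β))
          (Units.mk0 (runitK P Q i) (runitK_ne_zero P Q hPi (hQ i))))⁻¹ := by
      rw [hleft]
      group
    rw [this]
    exact hc.mul hval.inv
  -- adjacency and reachability
  set adj : (Fin n → ℤ) → (Fin n → ℤ) → Prop := fun s t =>
    s ∈ S ∧ t ∈ S ∧ ∃ i : Fin n,
      t = s + Pi.single i 1 ∨ s = t + Pi.single i 1 with hadj
  have adjsymm : ∀ s t, adj s t → adj t s := by
    rintro s t ⟨hs, ht, i, h | h⟩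
    · exact ⟨ht, hs, i, Or.inr h⟩
    · exact ⟨ht, hs, i, Or.inl h⟩
  -- the invariant along reachable points
  have invr : ∀ β, β ∈ S → ∀ s, Relation.ReflTransGen adj β s →
      s ∈ S ∧ (Ψ (toMulV (s - β))).right = toMulV (s - β) ∧
        ∃ c, Val (cz β + γ) (ρ (s - β)) c := by
    intro β hβ s h
    induction h with
    | refl =>
      refine ⟨hβ, ?_, 1, ?_⟩
      · rw [sub_self, toMulV_zero, map_one, SemidirectProduct.one_right]
      · rw [hρ]
        simp only [sub_self, toMulV_zero, map_one, SemidirectProduct.one_left]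
        exact Val_one _
    | tail hab hstep ih =>
      rename_i t u
      obtain ⟨ht, hright, c, hc⟩ := ih
      obtain ⟨ht', hu, i, heq | heq⟩ := hstep
      · subst heq
        obtain ⟨hr', hval⟩ := stepA β t i ht hu hright c hc
        exact ⟨hu, hr', _, hval⟩
      · subst heq
        obtain ⟨hr', hval⟩ := stepB β u i hu ht hright c hc
        exact ⟨hu, hr', _, hval⟩
  -- base point of each connected component
  set b : (Fin n → ℤ) → (Fin n → ℤ) := fun s => (Quot.mk adj s).out with hb
  have hbadj : ∀ s t, adj s t → b s = b t := by
    intro s t h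
    rw [hb]
    simp only
    rw [Quot.sound h]
  have hbS : ∀ s ∈ S, b s ∈ S ∧ Relation.ReflTransGen adj (b s) s := by
    intro s hs
    have hmk : Quot.mk adj (b s) = Quot.mk adj s := Quot.out_eq _
    have heqv := Quot.eqvGen_exact hmk
    have key : ∀ x y, Relation.EqvGen adj x y →
        x = y ∨ (x ∈ S ∧ y ∈ S ∧ Relation.ReflTransGen adj x y) := by
      intro x y h
      induction h with
      | rel x y h => exact Or.inr ⟨h.1, h.2.1, Relation.ReflTransGen.single h⟩
      | refl x => exact Or.inl rfl
      | symm x y h ih =>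
        rcases ih with rfl | ⟨hx, hy, hr⟩
        · exact Or.inl rfl
        · exact Or.inr ⟨hy, hx, (@Relation.ReflTransGen.stdSymm _ adj ⟨adjsymm⟩).symm _ _ hr⟩
      | trans x y z hxy hyz ih1 ih2 =>
        rcases ih1 with rfl | ⟨hx, hy, hr1⟩
        · exact ih2
        · rcases ih2 with rfl | ⟨hy', hz, hr2⟩
          · exact Or.inr ⟨hx, hy, hr1⟩
          · exact Or.inr ⟨hx, hz, hr1.trans hr2⟩
    rcases key _ _ heqv with heq | ⟨h1', _, h3'⟩
    · rw [heq]; exact ⟨hs, Relation.ReflTransGen.refl⟩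
    · exact ⟨h1', h3'⟩
  have inv : ∀ s (hs : s ∈ S), s ∈ S ∧
      (Ψ (toMulV (s - b s))).right = toMulV (s - b s) ∧
        ∃ c, Val (cz (b s) + γ) (ρ (s - b s)) c :=
    fun s hs => invr (b s) (hbS s hs).1 s (hbS s hs).2
  -- define φ
  set φ : (Fin n → ℤ) → ℂ :=
    fun s => if hs : s ∈ S then ((inv s hs).2.2).choose else 0 with hφ
  have hφ_pos : ∀ s (hs : s ∈ S), φ s = ((inv s hs).2.2).choose := by
    intro s hs
    rw [hφ]
    exact dif_pos hs
  have hφ_neg : ∀ s, s ∉ S → φ s = 0 := by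
    intro s hs
    rw [hφ]
    exact dif_neg hs
  refine ⟨φ, ?_, ?_⟩
  · ext s
    by_cases hs : s ∈ S
    · rw [Set.mem_setOf_eq, hφ_pos s hs]
      exact iff_of_true ((inv s hs).2.2).choose_spec.ne_zero hs
    · rw [Set.mem_setOf_eq, hφ_neg s hs]
      exact iff_of_false (by simp) hs
  · intro s i
    by_cases hs : s ∈ S
    · by_cases ht : s + (Pi.single i 1 : Fin n → ℤ) ∈ S
      · -- both in S
        have hbeq : b (s + Pi.single i 1) = b s :=
          (hbadj s (s + Pi.single i 1) ⟨hs, ht, i, Or.inl rfl⟩).symm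
        obtain ⟨-, hright, -⟩ := inv s hs
        have hval1 : Val (cz (b s) + γ) (ρ (s - b s)) (φ s) := by
          rw [hφ_pos s hs]
          exact ((inv s hs).2.2).choose_spec
        have hval2 : Val (cz (b (s + Pi.single i 1)) + γ)
            (ρ (s + Pi.single i 1 - b (s + Pi.single i 1))) (φ (s + Pi.single i 1)) := by
          rw [hφ_pos _ ht]
          exact ((inv _ ht).2.2).choose_spec
        rw [hbeq] at hval2
        have hval3 := (stepA (b s) s i hs ht hright _ hval1).2
        have hcc := hval2.unique hval3
        rw [hcc, mul_assoc, div_mul_cancel₀ _ (h4 i s hs)]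
      · -- s ∈ S, s + e i ∉ S
        rw [hφ_neg _ ht, hφ_pos s hs, h1 i s hs ht]
        simp
    · by_cases ht : s + (Pi.single i 1 : Fin n → ℤ) ∈ S
      · -- s ∉ S, s + e i ∈ S
        rw [hφ_neg s hs, h2 i s hs ht]
        simp
      · rw [hφ_neg s hs, hφ_neg _ ht]
        simp

end Main

end Sadykov

/-- Sadykov's characterization of the possible supports of series solutions to a Horn
system of hypergeometric difference equations. -/
theorem stmt6 (n : ℕ) (P Q : Fin n → MvPolynomial (Fin n) ℂ) (γ : Fin n → ℂ)
    (ι : (Fin n → ℤ) → (Fin n → ℂ)) (hι : ∀ s j, ι s j = (s j : ℂ))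
    (eC : Fin n → (Fin n → ℂ)) (heC : ∀ i, eC i = Pi.single i 1)
    (eZ : Fin n → (Fin n → ℤ)) (heZ : ∀ i, eZ i = Pi.single i 1)
    (hcompat : ∀ (i j : Fin n) (s : Fin n → ℂ),
      eval s (P i) * eval (s + eC i) (P j) * eval (s + eC j) (Q j) *
          eval (s + eC i + eC j) (Q i) =
        eval s (P j) * eval (s + eC j) (P i) * eval (s + eC i) (Q i) *
          eval (s + eC i + eC j) (Q j))
    (S : Set (Fin n → ℤ))
    (hreg : ∀ s ∈ S, ∀ i : Fin n,
      eval (ι s + γ) (P i) ≠ 0 ∨ eval (ι s + γ + eC i) (Q i) ≠ 0) :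
    (∃ φ : (Fin n → ℤ) → ℂ, {s | φ s ≠ 0} = S ∧
      ∀ (s : Fin n → ℤ) (i : Fin n),
        φ (s + eZ i) * eval (ι s + γ + eC i) (Q i) = φ s * eval (ι s + γ) (P i)) ↔
    (∀ i : Fin n,
      (∀ s ∈ S, s + eZ i ∉ S → eval (ι s + γ) (P i) = 0) ∧
      (∀ s ∉ S, s + eZ i ∈ S → eval (ι s + γ + eC i) (Q i) = 0) ∧
      (∀ s ∈ S, s + eZ i ∈ S → eval (ι s + γ) (P i) ≠ 0) ∧
      (∀ s ∈ S, eval (ι s + γ + eC i) (Q i) ≠ 0)) := by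
  have hι' : ι = cz := funext fun s => funext fun j => by rw [hι]; rfl
  constructor
  · -- necessity
    rintro ⟨φ, hsupp, heqn⟩ i
    have hmem : ∀ s, s ∈ S ↔ φ s ≠ 0 := fun s => by rw [← hsupp]; exact Iff.rfl
    have cond4 : ∀ s ∈ S, eval (ι s + γ + eC i) (Q i) ≠ 0 := by
      intro s hs h0
      rcases hreg s hs i with hP | hQv
      · have h := heqn s i
        rw [h0, mul_zero] at h
        rcases mul_eq_zero.mp h.symm with h' | h'
        · exact (hmem s).mp hs h'
        · exact hP h'
      · exact hQv h0
    refine ⟨?_, ?_, ?_, cond4⟩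
    · intro s hs hns
      have h := heqn s i
      have hzero : φ (s + eZ i) = 0 := not_not.mp fun hne => hns ((hmem _).mpr hne)
      rw [hzero, zero_mul] at h
      rcases mul_eq_zero.mp h.symm with h' | h'
      · exact absurd h' ((hmem s).mp hs)
      · exact h'
    · intro s hs hts
      have h := heqn s i
      have hzero : φ s = 0 := not_not.mp fun hne => hs ((hmem _).mpr hne)
      rw [hzero, zero_mul] at h
      rcases mul_eq_zero.mp h with h' | h'
      · exact absurd h' ((hmem _).mp hts)
      · exact h'
    · intro s hs hts
      have h := heqn s i
      intro hP
      rw [hP, mul_zero] at h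
      rcases mul_eq_zero.mp h with h' | h'
      · exact (hmem _).mp hts h'
      · exact cond4 s hs h'
  · -- sufficiency
    intro hcond
    have hpoly : ∀ i j, P i * trA (Pi.single i 1) (P j) * trA (Pi.single j 1) (Q j) *
          trA (Pi.single i (1:ℂ) + Pi.single j 1) (Q i)
        = P j * trA (Pi.single j 1) (P i) * trA (Pi.single i 1) (Q i) *
          trA (Pi.single i (1:ℂ) + Pi.single j 1) (Q j) := by
      intro i j
      apply MvPolynomial.funext
      intro x
      have h := hcompat i j x
      rw [heC, heC] at h
      simp only [map_mul, eval_trA, ← add_assoc]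
      exact h
    obtain ⟨φ, hsupp, heqn⟩ := exists_phi (γ := γ) (S := S) hpoly
      (fun i s hs hns => by
        have := (hcond i).1 s hs (by rwa [heZ])
        rwa [hι'] at this)
      (fun i s hs hts => by
        have := (hcond i).2.1 s hs (by rwa [heZ])
        rwa [hι', heC] at this)
      (fun i s hs hts => by
        have := (hcond i).2.2.1 s hs (by rwa [heZ])
        rwa [hι'] at this)
      (fun i s hs => by
        have := (hcond i).2.2.2 s hs
        rwa [hι', heC] at this)
    refine ⟨φ, hsupp, ?_⟩
    intro s i
    have := heqn s i
    rw [hι', heC, heZ]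
    exact this
end

section
/- Let S ⊆ ℤ^n, let a : S → ℂ, and let x⁰ ∈ (ℂ∖{0})^n be such that ∑_{s∈S} |a(s)·(x⁰)^s| < ∞. Let C ⊆ ℝ^n be a convex cone (containing 0) with S ⊆ C. Then for every x ∈ (ℂ∖{0})^n with Log x ∈ Log x⁰ − C^∨, the series converges absolutely at x: ∑_{s∈S} |a(s)·x^s| < ∞. -/
/-- Abel's lemma for Puiseux/Laurent series: if a series with support `S` contained in a
convex cone `C` converges absolutely at `x⁰`, then it converges absolutely at every `x`
with `Log x ∈ Log x⁰ − C^∨`. -/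
theorem stmt9 (n : ℕ) (S : Set (Fin n → ℤ)) (a : (Fin n → ℤ) → ℂ)
    (x0 : Fin n → ℂ) (hx0 : ∀ j, x0 j ≠ 0)
    (hconv : Summable (fun s : S => ‖a s.1 * ∏ j, x0 j ^ s.1 j‖))
    (C : Set (Fin n → ℝ)) (hCconv : Convex ℝ C) (hC0 : (0 : Fin n → ℝ) ∈ C)
    (hCcone : ∀ v ∈ C, ∀ lam : ℝ, 0 ≤ lam → lam • v ∈ C)
    (hS : ∀ s ∈ S, (fun j => (s j : ℝ)) ∈ C)
    (x : Fin n → ℂ) (hx : ∀ j, x j ≠ 0)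
    (hdual : ∀ u ∈ C, 0 ≤ ∑ j, u j *
      (Real.log (‖x0 j‖) - Real.log (‖x j‖))) :
    Summable (fun s : S => ‖a s.1 * ∏ j, x j ^ s.1 j‖) := by
  apply hconv.of_nonneg_of_le (fun s => norm_nonneg _)
  intro s
  have key : ∀ (y : Fin n → ℂ), (∀ j, y j ≠ 0) →
      ‖∏ j, y j ^ s.1 j‖
        = Real.exp (∑ j, (s.1 j : ℝ) * Real.log ‖y j‖) := by
    intro y hy
    rw [norm_prod, Real.exp_sum]
    refine Finset.prod_congr rfl fun j _ => ?_
    have hpos : 0 < ‖y j‖ := by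
      exact norm_pos_iff.mpr (hy j)
    rw [norm_zpow, ← Real.exp_log (zpow_pos hpos _), Real.log_zpow]
  rw [norm_mul, norm_mul, key x hx, key x0 hx0]
  refine mul_le_mul_of_nonneg_left (Real.exp_le_exp.2 ?_) (norm_nonneg _)
  have hd := hdual _ (hS s.1 s.2)
  have : (0:ℝ) ≤ ∑ j, ((s.1 j : ℝ) * Real.log ‖x0 j‖
      - (s.1 j : ℝ) * Real.log ‖x j‖) := by
    simpa [mul_sub] using hd
  rw [Finset.sum_sub_distrib] at this
  linarith
end

section
/- Let p ≥ 1, let a_1,…,a_p ∈ ℤ be not all zero with a_1 + ⋯ + a_p = 0, and let b_1,…,b_p ∈ ℂ be such that for every k ∈ ℕ and every i the number a_i·k + b_i is not a nonpositive integer. Then the power series ∑_{k=0}^∞ (∏_{i=1}^p Γ(a_i·k + b_i))·z^k in one complex variable z has radius of convergence R with 0 < R < ∞. -/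
open Filter Finset Topology

private lemma gamma_add_nat (x : ℂ) (hx : ∀ m : ℕ, x ≠ -(m:ℂ)) (n : ℕ) :
    Complex.Gamma (x + n) = (∏ j ∈ Finset.range n, (x + j)) * Complex.Gamma x := by
  induction n with
  | zero => simp
  | succ n ih =>
    have hxn : x + n ≠ 0 := by
      intro h
      exact hx n (by linear_combination h)
    have h1 : (x + ((n:ℕ)+1:ℕ) : ℂ) = (x + n) + 1 := by push_cast; ring
    rw [h1, Complex.Gamma_add_one _ hxn, ih, Finset.prod_range_succ]
    ring

private lemma tendsto_inv_nat : Tendsto (fun k : ℕ => ((k:ℂ))⁻¹) atTop (𝓝 0) := by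
  have h : Tendsto (fun k : ℕ => ((k:ℝ))⁻¹) atTop (𝓝 0) :=
    tendsto_inv_atTop_zero.comp tendsto_natCast_atTop_atTop
  have h2 := (Complex.continuous_ofReal.tendsto 0).comp h
  simpa [Function.comp_def, Complex.ofReal_inv] using h2

private lemma zpow_sum' {ι : Type*} (s : Finset ι) (x : ℂ) (hx : x ≠ 0) (f : ι → ℤ) :
    ∏ i ∈ s, x ^ f i = x ^ (∑ i ∈ s, f i) := by
  classical
  induction s using Finset.induction with
  | empty => simp
  | @insert _ _ h ih =>
    rw [Finset.prod_insert h, Finset.sum_insert h, ih, zpow_add₀ hx]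

private lemma ratio_tendsto (a : ℤ) (b : ℂ)
    (hb : ∀ (k : ℕ) (m : ℕ), (a : ℂ) * (k:ℂ) + b ≠ -(m:ℂ)) :
    Tendsto (fun k : ℕ =>
      Complex.Gamma ((a:ℂ) * ((k:ℕ)+1:ℕ) + b) / Complex.Gamma ((a:ℂ) * k + b) * (k:ℂ) ^ (-a))
      atTop (𝓝 ((a:ℂ) ^ a)) := by
  obtain ⟨n, rfl | rfl⟩ := a.eq_nat_or_neg
  · -- a = n ≥ 0
    have key : Tendsto (fun k : ℕ => ∏ j ∈ Finset.range n, ((n:ℂ) + (b + j) * (k:ℂ)⁻¹))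
        atTop (𝓝 ((n:ℂ) ^ (n:ℕ))) := by
      have h0 : ((n:ℂ) ^ (n:ℕ)) = ∏ _j ∈ Finset.range n, (n:ℂ) := by simp
      rw [h0]
      refine tendsto_finset_prod _ (fun j _ => ?_)
      have := (tendsto_const_nhds (x := b + (j:ℂ)) (f := atTop (α := ℕ))).mul tendsto_inv_nat
      simpa using (tendsto_const_nhds (x := (n:ℂ)) (f := atTop (α := ℕ))).add this
    have heq : ∀ᶠ k : ℕ in atTop,
        (∏ j ∈ Finset.range n, ((n:ℂ) + (b + j) * (k:ℂ)⁻¹)) =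
        Complex.Gamma (((n:ℤ):ℂ) * ((k:ℕ)+1:ℕ) + b) / Complex.Gamma (((n:ℤ):ℂ) * k + b)
          * (k:ℂ) ^ (-(n:ℤ)) := by
      filter_upwards [eventually_ge_atTop 1] with k hk
      have hk0 : (k:ℂ) ≠ 0 := Nat.cast_ne_zero.mpr (by omega)
      have hx : ∀ m : ℕ, ((n:ℤ):ℂ) * k + b ≠ -(m:ℂ) := hb k
      have hΓ : Complex.Gamma (((n:ℤ):ℂ) * k + b) ≠ 0 := Complex.Gamma_ne_zero hx
      have harg : ((n:ℤ):ℂ) * ((k:ℕ)+1:ℕ) + b = (((n:ℤ):ℂ) * k + b) + n := by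
        push_cast; ring
      rw [harg, gamma_add_nat _ hx, mul_div_assoc, div_self hΓ, mul_one]
      rw [zpow_neg, zpow_natCast, ← inv_pow,
        show ((k:ℂ)⁻¹)^n = ∏ _j ∈ Finset.range n, (k:ℂ)⁻¹ by simp,
        ← Finset.prod_mul_distrib]
      refine Finset.prod_congr rfl (fun j _ => ?_)
      push_cast
      field_simp
      ring
    rw [show (((n:ℤ):ℂ) ^ (n:ℤ)) = (n:ℂ)^(n:ℕ) by push_cast [zpow_natCast]; norm_num]
    exact key.congr' heq
  · -- a = -n
    have key : Tendsto (fun k : ℕ =>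
        ∏ j ∈ Finset.range n, (-(n:ℂ) - (n:ℂ) * (k:ℂ)⁻¹ + (b + j) * (k:ℂ)⁻¹)⁻¹)
        atTop (𝓝 ((((-n:ℤ)):ℂ) ^ (-n:ℤ))) := by
      have hlim : ((((-n:ℤ)):ℂ) ^ (-n:ℤ)) = ∏ _j ∈ Finset.range n, (-(n:ℂ))⁻¹ := by
        push_cast
        rw [zpow_neg, zpow_natCast, ← inv_pow, Finset.prod_const, Finset.card_range]
      rw [hlim]
      refine tendsto_finset_prod _ (fun j hj => ?_)
      have hn0 : (n:ℕ) ≠ 0 := by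
        have := Finset.mem_range.mp hj; omega
      have h1 := (tendsto_const_nhds (x := (n:ℂ)) (f := atTop (α := ℕ))).mul tendsto_inv_nat
      have h2 := (tendsto_const_nhds (x := b + (j:ℂ)) (f := atTop (α := ℕ))).mul tendsto_inv_nat
      have h3 := ((tendsto_const_nhds (x := -(n:ℂ)) (f := atTop (α := ℕ))).sub h1).add h2
      simp only [mul_zero, sub_zero, add_zero] at h3
      refine h3.inv₀ ?_
      simpa using hn0
    have heq : ∀ᶠ k : ℕ in atTop,
        (∏ j ∈ Finset.range n, (-(n:ℂ) - (n:ℂ) * (k:ℂ)⁻¹ + (b + j) * (k:ℂ)⁻¹)⁻¹) =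
        Complex.Gamma (((-n:ℤ):ℂ) * ((k:ℕ)+1:ℕ) + b) / Complex.Gamma (((-n:ℤ):ℂ) * k + b)
          * (k:ℂ) ^ (-(-n:ℤ)) := by
      filter_upwards [eventually_ge_atTop 1] with k hk
      have hk0 : (k:ℂ) ≠ 0 := Nat.cast_ne_zero.mpr (by omega)
      set y : ℂ := ((-n:ℤ):ℂ) * ((k:ℕ)+1:ℕ) + b with hy
      have hx : ∀ m : ℕ, y ≠ -(m:ℂ) := fun m => hb (k+1) m
      have hΓy : Complex.Gamma y ≠ 0 := Complex.Gamma_ne_zero hx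
      have harg : ((-n:ℤ):ℂ) * k + b = y + n := by rw [hy]; push_cast; ring
      rw [neg_neg, zpow_natCast, harg, gamma_add_nat y hx n,
        div_mul_cancel_right₀ hΓy]
      have hfac : ∀ j ∈ Finset.range n,
          (-(n:ℂ) - (n:ℂ) * (k:ℂ)⁻¹ + (b + j) * (k:ℂ)⁻¹)⁻¹ = ((y + j) * (k:ℂ)⁻¹)⁻¹ := by
        intro j _
        congr 1
        rw [hy]
        push_cast
        field_simp
        ring
      rw [Finset.prod_congr rfl hfac]
      simp [mul_inv, Finset.prod_mul_distrib, Finset.prod_inv_distrib, Finset.prod_const,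
        Finset.card_range, inv_pow]
      ring
    exact key.congr' heq

/-- The restriction of a nonconfluent hypergeometric series to one variable has a finite,
positive radius of convergence. -/
theorem stmt12 (p : ℕ) (hp : 1 ≤ p) (a : Fin p → ℤ) (ha0 : ∃ i, a i ≠ 0)
    (hsum : ∑ i, a i = 0) (b : Fin p → ℂ)
    (hb : ∀ (k : ℕ) (i : Fin p) (m : ℕ), (a i : ℂ) * (k : ℂ) + b i ≠ -(m : ℂ)) :
    ∃ R : ℝ, 0 < R ∧ ∀ z : ℂ,
      (‖z‖ < R →
        Summable (fun k : ℕ => (∏ i, Complex.Gamma ((a i : ℂ) * (k : ℂ) + b i)) * z ^ k)) ∧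
      (R < ‖z‖ →
        ¬ Summable (fun k : ℕ => (∏ i, Complex.Gamma ((a i : ℂ) * (k : ℂ) + b i)) * z ^ k)) := by
  set c : ℕ → ℂ := fun k => ∏ i, Complex.Gamma ((a i : ℂ) * (k : ℂ) + b i) with hc_def
  have hc : ∀ k, c k ≠ 0 := fun k =>
    Finset.prod_ne_zero_iff.mpr fun i _ => Complex.Gamma_ne_zero (fun m => hb k i m)
  set L : ℂ := ∏ i, (a i : ℂ) ^ (a i) with hL_def
  have hLne : L ≠ 0 := by
    refine Finset.prod_ne_zero_iff.mpr fun i _ => ?_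
    by_cases h : a i = 0
    · simp [h]
    · exact zpow_ne_zero _ (Int.cast_ne_zero.mpr h)
  -- the ratio of consecutive coefficients tends to L
  have hratio : Tendsto (fun k : ℕ => c (k+1) / c k) atTop (𝓝 L) := by
    have ht := tendsto_finset_prod (f := fun (i : Fin p) (k : ℕ) =>
        Complex.Gamma ((a i:ℂ) * ((k:ℕ)+1:ℕ) + b i) / Complex.Gamma ((a i:ℂ) * k + b i)
          * (k:ℂ) ^ (-(a i))) Finset.univ
      (fun i _ => ratio_tendsto (a i) (b i) (fun k m => hb k i m))
    refine ht.congr' ?_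
    filter_upwards [eventually_ge_atTop 1] with k hk
    have hk0 : (k:ℂ) ≠ 0 := Nat.cast_ne_zero.mpr (by omega)
    rw [Finset.prod_mul_distrib, zpow_sum' _ _ hk0]
    have h0 : (∑ i, -(a i)) = 0 := by rw [Finset.sum_neg_distrib, hsum, neg_zero]
    rw [h0, zpow_zero, mul_one, hc_def, ← Finset.prod_div_distrib]
  have hLnorm : Tendsto (fun k : ℕ => ‖c (k+1)‖ / ‖c k‖) atTop (𝓝 ‖L‖) := by
    simpa [norm_div] using hratio.norm
  refine ⟨‖L‖⁻¹, inv_pos.mpr (norm_pos_iff.mpr hLne), fun z => ?_⟩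
  have hLpos : (0:ℝ) < ‖L‖ := norm_pos_iff.mpr hLne
  have habs : ‖z‖ = ‖z‖ := rfl
  have hratΓ : z ≠ 0 → Tendsto (fun k : ℕ => ‖c (k+1) * z ^ (k+1)‖ / ‖c k * z ^ k‖)
      atTop (𝓝 (‖L‖ * ‖z‖)) := by
    intro hz0
    have := hLnorm.mul_const ‖z‖
    refine this.congr (fun k => ?_)
    have h1 : ‖z‖ ≠ 0 := norm_ne_zero_iff.mpr hz0
    have h2 : ‖c k‖ ≠ 0 := norm_ne_zero_iff.mpr (hc k)
    symm
    calc ‖c (k+1) * z^(k+1)‖ / ‖c k * z^k‖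
        = (‖c (k+1)‖ * ‖z‖) * ‖z‖^k / (‖c k‖ * ‖z‖^k) := by
          rw [norm_mul, norm_mul, norm_pow, norm_pow, pow_succ]; ring_nf
      _ = (‖c (k+1)‖ * ‖z‖) / ‖c k‖ := mul_div_mul_right _ _ (pow_ne_zero k h1)
      _ = ‖c (k+1)‖ / ‖c k‖ * ‖z‖ := by ring
  constructor
  · intro hz
    by_cases hz0 : z = 0
    · subst hz0
      refine summable_of_ne_finset_zero (s := {0}) fun k hk => ?_
      have : k ≠ 0 := by simpa using hk
      simp [zero_pow this]
    · refine summable_of_ratio_test_tendsto_lt_one (l := ‖L‖ * ‖z‖) ?_ ?_ (hratΓ hz0)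
      · rw [habs] at hz
        calc ‖L‖ * ‖z‖ < ‖L‖ * ‖L‖⁻¹ := by
              exact mul_lt_mul_of_pos_left hz hLpos
          _ = 1 := mul_inv_cancel₀ (ne_of_gt hLpos)
      · exact Eventually.of_forall fun k => mul_ne_zero (hc k) (pow_ne_zero _ hz0)
  · intro hz
    have hz0 : z ≠ 0 := by
      intro h
      rw [h, norm_zero] at hz
      exact absurd hz (not_lt.mpr (le_of_lt (inv_pos.mpr hLpos)))
    refine not_summable_of_ratio_test_tendsto_gt_one (l := ‖L‖ * ‖z‖) ?_ (hratΓ hz0)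
    rw [habs] at hz
    calc (1:ℝ) = ‖L‖ * ‖L‖⁻¹ := (mul_inv_cancel₀ (ne_of_gt hLpos)).symm
      _ < ‖L‖ * ‖z‖ := mul_lt_mul_of_pos_left hz hLpos
end

section
/- Let M ⊆ ℝ^n be a nonempty convex open set and let U = {x ∈ (ℂ∖{0})^n : Log x ∈ M}, a Reinhardt domain. Then the fundamental group of U is commutative: for every basepoint x₀ ∈ U and all elements a, b of the fundamental group π₁(U, x₀), one has a·b = b·a. -/
open unitInterval

noncomputable section

namespace Stmt13Aux

def UU (n : ℕ) (M : Set (Fin n → ℝ)) : Set (Fin n → ℂ) :=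
  {x | (∀ j, x j ≠ 0) ∧ (fun j => Real.log (‖x j‖)) ∈ M}

def core (τ m : ℝ) (z : ℂ) : ℂ :=
  (Real.exp ((1 - τ) * m + τ * Real.log (‖z‖)) : ℝ) * (z / (‖z‖ : ℂ))

lemma core_ne {z : ℂ} (hz : z ≠ 0) (τ m : ℝ) : core τ m z ≠ 0 := by
  have h1 : (‖z‖ : ℂ) ≠ 0 := by
    simpa using norm_ne_zero_iff.mpr hz
  exact mul_ne_zero (by simpa using Real.exp_ne_zero _) (div_ne_zero hz h1)

lemma abs_core {z : ℂ} (hz : z ≠ 0) (τ m : ℝ) :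
    ‖core τ m z‖ = Real.exp ((1 - τ) * m + τ * Real.log (‖z‖)) := by
  have h0 : ‖z‖ ≠ 0 := norm_ne_zero_iff.mpr hz
  rw [core, norm_mul, norm_div, Complex.norm_real, Complex.norm_real, Real.norm_eq_abs,
    Real.norm_eq_abs, Real.abs_exp, abs_of_nonneg (norm_nonneg z), div_self h0, mul_one]

lemma log_abs_core {z : ℂ} (hz : z ≠ 0) (τ m : ℝ) :
    Real.log (‖core τ m z‖) = (1 - τ) * m + τ * Real.log (‖z‖) := by
  rw [abs_core hz, Real.log_exp]

lemma core_one {z : ℂ} (hz : z ≠ 0) (m : ℝ) : core 1 m z = z := by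
  have h0 : ‖z‖ ≠ 0 := norm_ne_zero_iff.mpr hz
  have h0' : (0:ℝ) < ‖z‖ := (norm_pos_iff.mpr hz)
  rw [core]
  rw [show (1 - (1:ℝ)) * m + 1 * Real.log (‖z‖) = Real.log (‖z‖) by ring]
  rw [Real.exp_log h0']
  have h1 : (‖z‖ : ℂ) ≠ 0 := by simpa using h0
  rw [mul_comm, div_mul_cancel₀ _ h1]

lemma core_continuous {α : Type*} [TopologicalSpace α] {f : α → ℂ} {g : α → ℝ} (m : ℝ)
    (hf : Continuous f) (hne : ∀ a, f a ≠ 0) (hg : Continuous g) :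
    Continuous fun a => core (g a) m (f a) := by
  have habs : Continuous fun a => ‖f a‖ := continuous_norm.comp hf
  have habsne : ∀ a, ‖f a‖ ≠ 0 := fun a => norm_ne_zero_iff.mpr (hne a)
  apply Continuous.mul
  · exact Complex.continuous_ofReal.comp
      (Real.continuous_exp.comp
        (((continuous_const.sub hg).mul continuous_const).add (hg.mul (habs.log habsne))))
  · exact hf.div (Complex.continuous_ofReal.comp habs) (fun a => by simpa using habsne a)

variable {n : ℕ} {M : Set (Fin n → ℝ)} {m0 : Fin n → ℝ}

lemma core_mem (hMconv : Convex ℝ M) (hm0 : m0 ∈ M) {x : Fin n → ℂ} (hx : x ∈ UU n M) (τ : I) :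
    (fun j => core τ (m0 j) (x j)) ∈ UU n M := by
  refine ⟨fun j => core_ne (hx.1 j) _ _, ?_⟩
  have h : (fun j => Real.log (‖core τ (m0 j) (x j)‖)) =
      (1 - (τ:ℝ)) • m0 + (τ:ℝ) • (fun j => Real.log (‖x j‖)) := by
    funext j
    simp [log_abs_core (hx.1 j), Pi.add_apply, Pi.smul_apply, smul_eq_mul]
  show (fun j => Real.log (‖core τ (m0 j) (x j)‖)) ∈ M
  rw [h]
  exact hMconv hm0 hx.2 (sub_nonneg.mpr τ.2.2) τ.2.1 (by ring)

lemma core_zero_mem (hm0 : m0 ∈ M) (z : Fin n → ℂˣ) :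
    (fun j => core 0 (m0 j) (z j : ℂ)) ∈ UU n M := by
  refine ⟨fun j => core_ne (z j).ne_zero _ _, ?_⟩
  have h : (fun j => Real.log (‖core 0 (m0 j) (z j : ℂ)‖)) = m0 := by
    funext j
    rw [log_abs_core (z j).ne_zero]
    ring
  show (fun j => Real.log (‖core 0 (m0 j) (z j : ℂ)‖)) ∈ M
  rw [h]; exact hm0

/-- the map `U → (ℂˣ)ⁿ`. -/
def fMap : C(↥(UU n M), Fin n → ℂˣ) where
  toFun x j := Units.mk0 (x.1 j) (x.2.1 j)
  continuous_toFun := by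
    refine continuous_pi fun j => ?_
    rw [Units.continuous_iff]
    constructor
    · exact (continuous_apply j).comp continuous_subtype_val
    · exact ((continuous_apply j).comp continuous_subtype_val).inv₀ fun x => x.2.1 j

/-- the map `(ℂˣ)ⁿ → U`. -/
def sMap (hm0 : m0 ∈ M) : C(Fin n → ℂˣ, ↥(UU n M)) where
  toFun z := ⟨fun j => core 0 (m0 j) (z j : ℂ), core_zero_mem hm0 z⟩
  continuous_toFun := by
    refine Continuous.subtype_mk (continuous_pi fun j => ?_) _
    exact core_continuous (m0 j)
      (Units.continuous_val.comp (continuous_apply j)) (fun z => (z j).ne_zero) continuous_const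

def homotopyEquivAux (hMconv : Convex ℝ M) (hm0 : m0 ∈ M) :
    ContinuousMap.HomotopyEquiv ↥(UU n M) (Fin n → ℂˣ) where
  toFun := fMap
  invFun := sMap hm0
  left_inv := by
    refine ⟨⟨⟨fun p => ⟨fun j => core p.1 (m0 j) (p.2.1 j), core_mem hMconv hm0 p.2.2 p.1⟩, ?_⟩,
      ?_, ?_⟩⟩
    · refine Continuous.subtype_mk (continuous_pi fun j => ?_) _
      exact core_continuous (m0 j)
        ((continuous_apply j).comp (continuous_subtype_val.comp continuous_snd))
        (fun p => p.2.2.1 j)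
        (continuous_subtype_val.comp continuous_fst)
    · intro x
      rfl
    · intro x
      exact Subtype.ext (funext fun j => core_one (x.2.1 j) _)
  right_inv := by
    refine ⟨⟨⟨fun p j => Units.mk0 (core p.1 (m0 j) (p.2 j : ℂ))
        (core_ne (p.2 j).ne_zero _ _), ?_⟩, ?_, ?_⟩⟩
    · refine continuous_pi fun j => ?_
      rw [Units.continuous_iff]
      have hc : Continuous fun p : I × (Fin n → ℂˣ) => core p.1 (m0 j) (p.2 j : ℂ) :=
        core_continuous (m0 j)
          (Units.continuous_val.comp ((continuous_apply j).comp continuous_snd))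
          (fun p => (p.2 j).ne_zero)
          (continuous_subtype_val.comp continuous_fst)
      exact ⟨hc, hc.inv₀ fun p => core_ne (p.2 j).ne_zero _ _⟩
    · intro z
      rfl
    · intro z
      funext j
      exact Units.ext (core_one (z j).ne_zero _)

end Stmt13Aux

section EHpart

open CategoryTheory unitInterval

attribute [local instance] Path.Homotopic.setoid

noncomputable section

variable {G : Type*} [TopologicalSpace G] [Group G] [IsTopologicalGroup G]

/-- Pointwise (translated) multiplication of loops at `g`. -/
def ptMul (g : G) (p q : Path g g) : Path g g where
  toFun t := p t * g⁻¹ * q t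
  continuous_toFun := (p.continuous.mul continuous_const).mul q.continuous
  source' := by simp
  target' := by simp

lemma ptMul_homotopic (g : G) {p p' q q' : Path g g} (hp : p.Homotopic p') (hq : q.Homotopic q') :
    (ptMul g p q).Homotopic (ptMul g p' q') := by
  obtain ⟨H1⟩ := hp
  obtain ⟨H2⟩ := hq
  refine ⟨⟨⟨⟨fun x => H1 x * g⁻¹ * H2 x, ?_⟩, ?_, ?_⟩, ?_⟩⟩
  · exact (H1.continuous.mul continuous_const).mul H2.continuous
  · intro t; simp [ptMul]
  · intro t; simp [ptMul]
  · intro t x hx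
    have h1 := H1.eq_fst t hx
    have h2 := H2.eq_fst t hx
    simp only [ContinuousMap.coe_mk] at *
    rw [h1, h2]; rfl

lemma trans_eq_ptMul₁ (g : G) (p q : Path g g) :
    p.trans q = ptMul g (p.trans (Path.refl g)) ((Path.refl g).trans q) := by
  ext t
  show (p.trans q) t = (p.trans (Path.refl g)) t * g⁻¹ * ((Path.refl g).trans q) t
  rw [Path.trans_apply, Path.trans_apply, Path.trans_apply]
  split_ifs <;> simp

lemma trans_eq_ptMul₂ (g : G) (p q : Path g g) :
    q.trans p = ptMul g ((Path.refl g).trans p) (q.trans (Path.refl g)) := by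
  ext t
  show (q.trans p) t = ((Path.refl g).trans p) t * g⁻¹ * (q.trans (Path.refl g)) t
  rw [Path.trans_apply, Path.trans_apply, Path.trans_apply]
  split_ifs <;> simp

lemma trans_homotopic_comm (g : G) (p q : Path g g) :
    (p.trans q).Homotopic (q.trans p) := by
  have h1 : (p.trans q).Homotopic (ptMul g p q) := by
    rw [trans_eq_ptMul₁ g p q]
    exact ptMul_homotopic g ⟨Path.Homotopy.transRefl p⟩ ⟨Path.Homotopy.reflTrans q⟩
  have h2 : (q.trans p).Homotopic (ptMul g p q) := by
    rw [trans_eq_ptMul₂ g p q]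
    exact ptMul_homotopic g ⟨Path.Homotopy.reflTrans p⟩ ⟨Path.Homotopy.transRefl q⟩
  exact h1.trans h2.symm

lemma quotient_comp_comm (g : G) (P Q : Path.Homotopic.Quotient g g) :
    P.trans Q = Q.trans P := by
  induction P using Quotient.inductionOn with
  | h p =>
  induction Q using Quotient.inductionOn with
  | h q =>
  exact Quotient.sound (trans_homotopic_comm g p q)

universe u

lemma comm_of_homotopyEquiv {X Y : TopCat.{u}} (h : ContinuousMap.HomotopyEquiv X Y)
    (hY : ∀ (y : Y) (P Q : Path.Homotopic.Quotient y y), P.trans Q = Q.trans P)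
    (x : X) (a b : FundamentalGroup X x) : a * b = b * a := by
  let F := (FundamentalGroupoidFunctor.equivOfHomotopyEquiv h).functor
  show b ≫ a = a ≫ b
  apply F.map_injective
  exact (F.map_comp b a).trans ((hY _ _ _).trans (F.map_comp a b).symm)


end

end EHpart

/-- The fundamental group of the Reinhardt domain `Log⁻¹(M)` over a nonempty convex open
set `M ⊆ ℝⁿ` is commutative. -/
theorem stmt13 (n : ℕ) (M : Set (Fin n → ℝ)) (hMne : M.Nonempty)
    (hMconv : Convex ℝ M) (hMopen : IsOpen M)
    (U : Set (Fin n → ℂ))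
    (hU : U = {x | (∀ j, x j ≠ 0) ∧ (fun j => Real.log ‖x j‖) ∈ M}) :
    ∀ (x0 : U) (a b : FundamentalGroup U x0), a * b = b * a := by
  subst hU
  obtain ⟨m0, hm0⟩ := hMne
  intro x0 a b
  exact comm_of_homotopyEquiv (X := TopCat.of ↥(Stmt13Aux.UU n M))
    (Y := TopCat.of (Fin n → ℂˣ))
    (Stmt13Aux.homotopyEquivAux hMconv hm0)
    (fun y P Q => quotient_comp_comm (G := Fin n → ℂˣ) y P Q) x0 a b
end
end

section
/- Let n ≥ 1 and p ≥ 1 be integers. For s ∈ ℕ^n put σ(s) = s_2 + ⋯ + s_n and c(s) = ((s_1 + p·(σ(s)+1) − 1)!·σ(s)!) / (s_1!·s_2!⋯s_n!·(p·(σ(s)+1) − 1)!). Then there is a neighborhood W of 0 in ℂ^n such that for every x ∈ W the series ∑_{s∈ℕ^n} c(s)·x^s converges absolutely, (1−x_1)^p − x_2 − ⋯ − x_n ≠ 0, and ∑_{s∈ℕ^n} c(s)·x^s = ((1−x_1)^p − x_2 − ⋯ − x_n)^{−1}. -/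
open Finset

namespace Stmt15Aux

/-- The coefficient as a natural number. -/
def N (p n : ℕ) (s : Fin (n + 1) → ℕ) : ℕ :=
  (s 0 + (p * ((∑ i : Fin n, s i.succ) + 1) - 1)).choose (s 0) *
    Nat.multinomial Finset.univ (fun i : Fin n => s i.succ)

/-- The small radius. -/
noncomputable def eps (p n : ℕ) : ℝ := ((2 : ℝ) ^ p * (4 * n + 4))⁻¹

lemma eps_pos (p n : ℕ) : 0 < eps p n := by
  unfold eps; positivity

lemma eps_le (p n : ℕ) : eps p n ≤ 1 / 4 := by
  unfold eps
  have h1 : (1 : ℝ) ≤ 2 ^ p := one_le_pow₀ (by norm_num)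
  have h2 : (4 : ℝ) ≤ 2 ^ p * (4 * n + 4) := by nlinarith [Nat.cast_nonneg (α := ℝ) n]
  calc ((2 : ℝ) ^ p * (4 * n + 4))⁻¹ ≤ ((4 : ℝ))⁻¹ := by
        apply inv_anti₀ (by norm_num) h2
    _ = 1 / 4 := by norm_num

lemma norms (p n : ℕ) {𝕜 : Type} [RCLike 𝕜] (x : Fin (n + 1) → 𝕜)
    (hx : ∀ i, ‖x i‖ < eps p n) :
    ‖x 0‖ < 1 ∧ (1 : 𝕜) - x 0 ≠ 0 ∧
      ‖∑ i : Fin n, x i.succ‖ < ‖(1 - x 0) ^ p‖ ∧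
      (1 - x 0) ^ p - ∑ i : Fin n, x i.succ ≠ 0 := by
  have hε4 := eps_le p n
  have h0 : ‖x 0‖ < 1 := (hx 0).trans_le (by linarith)
  have hz : (1 : ℝ) / 2 ≤ ‖1 - x 0‖ := by
    have h := norm_sub_norm_le (1 : 𝕜) (x 0)
    rw [norm_one] at h
    have := (hx 0).le
    linarith
  have hne : (1 : 𝕜) - x 0 ≠ 0 := by
    intro h
    rw [h, norm_zero] at hz; linarith
  have hpow : ((1 : ℝ) / 2) ^ p ≤ ‖(1 - x 0) ^ p‖ := by
    rw [norm_pow]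
    exact pow_le_pow_left₀ (by norm_num) hz p
  have hY : ‖∑ i : Fin n, x i.succ‖ ≤ n * eps p n := by
    refine (norm_sum_le _ _).trans ?_
    calc ∑ i : Fin n, ‖x i.succ‖ ≤ ∑ _i : Fin n, eps p n :=
          Finset.sum_le_sum fun i _ => (hx i.succ).le
      _ = n * eps p n := by simp [mul_comm]
  have hkey : (n : ℝ) * eps p n < (1 / 2) ^ p := by
    have h2p : (0 : ℝ) < 2 ^ p := by positivity
    rw [div_pow, one_pow, eps, mul_inv]
    have h1 : (n : ℝ) * ((4 : ℝ) * (n : ℝ) + 4)⁻¹ < 1 := by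
      rw [← div_eq_mul_inv, div_lt_one (by positivity)]
      have := Nat.cast_nonneg (α := ℝ) n
      linarith
    calc (n : ℝ) * ((2 ^ p)⁻¹ * ((4 : ℝ) * (n : ℝ) + 4)⁻¹)
        = (2 ^ p)⁻¹ * ((n : ℝ) * ((4 : ℝ) * (n : ℝ) + 4)⁻¹) := by ring
      _ < (2 ^ p)⁻¹ * 1 := by
          exact mul_lt_mul_of_pos_left h1 (by positivity)
      _ = 1 / 2 ^ p := by rw [mul_one, one_div]
  have hYlt : ‖∑ i : Fin n, x i.succ‖ < ‖(1 - x 0) ^ p‖ := by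
    calc ‖∑ i : Fin n, x i.succ‖ ≤ n * eps p n := hY
      _ < (1 / 2) ^ p := hkey
      _ ≤ _ := hpow
  refine ⟨h0, hne, hYlt, fun h => ?_⟩
  rw [sub_eq_zero] at h
  rw [h] at hYlt
  exact lt_irrefl _ hYlt

lemma slice (p n : ℕ) (hp : 1 ≤ p) {𝕜 : Type} [RCLike 𝕜] {z : 𝕜} (hz : ‖z‖ < 1)
    (t : Fin n → ℕ) :
    HasSum (fun k : ℕ => (N p n (Fin.cons k t) : 𝕜) * z ^ k)
      ((Nat.multinomial Finset.univ t : 𝕜) *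
        (1 / (1 - z) ^ (p * ((∑ i : Fin n, t i) + 1)))) := by
  have h1 : 1 ≤ p * ((∑ i : Fin n, t i) + 1) := Nat.one_le_iff_ne_zero.2 (by positivity)
  set r := p * ((∑ i : Fin n, t i) + 1) - 1 with hr
  have hr1 : r + 1 = p * ((∑ i : Fin n, t i) + 1) := by omega
  have H := (hasSum_choose_mul_geometric_of_norm_lt_one r hz).mul_left
      ((Nat.multinomial Finset.univ t : 𝕜))
  rw [hr1] at H
  refine H.congr_fun ?_
  intro k
  have hN : N p n (Fin.cons k t) = (k + r).choose r * Nat.multinomial Finset.univ t := by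
    have hsym := Nat.choose_symm (Nat.le_add_left r k)
    simp only [Nat.add_sub_cancel] at hsym
    simp only [N, Fin.cons_zero, Fin.cons_succ, ← hr, ← hsym]
  rw [hN]
  push_cast
  ring

lemma c_eq (p n : ℕ) (hp : 1 ≤ p) (s : Fin (n + 1) → ℕ) :
    (((s 0 + p * ((∑ i : Fin n, s i.succ) + 1) - 1).factorial *
        (∑ i : Fin n, s i.succ).factorial : ℕ) : ℂ) /
      (((∏ i, (s i).factorial) *
        (p * ((∑ i : Fin n, s i.succ) + 1) - 1).factorial : ℕ) : ℂ) = (N p n s : ℂ) := by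
  set m := ∑ i : Fin n, s i.succ with hm
  have hq : 1 ≤ p * (m + 1) := Nat.one_le_iff_ne_zero.2 (by positivity)
  set q := p * (m + 1) with hqdef
  have hnum : s 0 + q - 1 = s 0 + (q - 1) := by omega
  have A : (s 0 + (q - 1)).choose (s 0) * (s 0).factorial * (q - 1).factorial
      = (s 0 + (q - 1)).factorial := by
    have := Nat.choose_mul_factorial_mul_factorial (Nat.le_add_right (s 0) (q - 1))
    simpa [Nat.add_sub_cancel_left] using this
  have B : (∏ i : Fin n, (s i.succ).factorial) *
      Nat.multinomial Finset.univ (fun i : Fin n => s i.succ) = m.factorial := by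
    simpa [hm] using Nat.multinomial_spec (s := (univ : Finset (Fin n)))
      (f := fun i : Fin n => s i.succ)
  have hprod : (∏ i : Fin (n + 1), (s i).factorial)
      = (s 0).factorial * ∏ i : Fin n, (s i.succ).factorial := Fin.prod_univ_succ _
  have key : (s 0 + q - 1).factorial * m.factorial
      = N p n s * ((∏ i : Fin (n + 1), (s i).factorial) * (q - 1).factorial) := by
    rw [hnum, hprod, N, ← hm, ← hqdef, ← A, ← B]
    ring
  have hden : ((((∏ i, (s i).factorial) * (q - 1).factorial : ℕ)) : ℂ) ≠ 0 := by
    rw [Nat.cast_ne_zero]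
    positivity
  rw [div_eq_iff hden]
  push_cast [key]
  ring

def sigmaEquiv (n : ℕ) :
    (Σ m : ℕ, ↥(Finset.piAntidiag (univ : Finset (Fin n)) m)) ≃ (Fin n → ℕ) where
  toFun q := q.2.1
  invFun t := ⟨∑ i, t i, ⟨t, by simp [Finset.mem_piAntidiag]⟩⟩
  left_inv := by
    rintro ⟨m, t, ht⟩
    obtain ⟨h1, -⟩ := Finset.mem_piAntidiag.1 ht
    subst h1
    rfl
  right_inv t := rfl

lemma summable_real (p n : ℕ) (hp : 1 ≤ p) (x : Fin (n + 1) → ℝ)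
    (h0 : ∀ i, 0 ≤ x i) (hx : ∀ i, ‖x i‖ < eps p n) :
    Summable (fun s : Fin (n + 1) → ℕ => (N p n s : ℝ) * ∏ i, x i ^ s i) := by
  classical
  obtain ⟨hz1, hne, hYlt, hD⟩ := norms p n x hx
  have hz0 : 0 ≤ x 0 := h0 0
  have hzlt : x 0 < 1 := by rwa [Real.norm_eq_abs, abs_of_nonneg hz0] at hz1
  have h1z : 0 < 1 - x 0 := by linarith
  have hY0 : 0 ≤ ∑ i : Fin n, x i.succ := Finset.sum_nonneg fun i _ => h0 _
  have hYlt' : (∑ i : Fin n, x i.succ) < (1 - x 0) ^ p := by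
    rwa [Real.norm_eq_abs, abs_of_nonneg hY0, Real.norm_eq_abs,
      abs_of_nonneg (le_of_lt (by positivity))] at hYlt
  set C : ℝ := 1 / (1 - x 0) ^ p with hC
  have hC0 : 0 ≤ C := by positivity
  have hw0 : 0 ≤ (∑ i : Fin n, x i.succ) * C := mul_nonneg hY0 hC0
  have hw1 : (∑ i : Fin n, x i.succ) * C < 1 := by
    rw [hC, mul_one_div, div_lt_one (by positivity)]
    exact hYlt'
  let e1 : ((Fin n → ℕ) × ℕ) ≃ (Fin (n + 1) → ℕ) :=
    (Equiv.prodComm _ _).trans (Fin.consEquiv fun _ => ℕ)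
  rw [← e1.summable_iff]
  have hcons : ∀ (t : Fin n → ℕ) (k : ℕ),
      (N p n (Fin.cons k t) : ℝ) * x 0 ^ k * ∏ i, x i.succ ^ t i
        = (N p n (e1 (t, k)) : ℝ) * ∏ i, x i ^ (e1 (t, k)) i := by
    intro t k
    have he : e1 (t, k) = Fin.cons k t := rfl
    rw [he, Fin.prod_univ_succ]
    simp only [Fin.cons_zero, Fin.cons_succ, mul_assoc]
  refine (summable_prod_of_nonneg ?_).2 ⟨?_, ?_⟩
  · intro q
    exact mul_nonneg (Nat.cast_nonneg _) (Finset.prod_nonneg fun i _ => pow_nonneg (h0 i) _)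
  · intro t
    exact Summable.congr
      (((slice p n hp (z := x 0) hz1 t).mul_right (∏ i, x i.succ ^ t i)).summable)
      fun k => hcons t k
  · have houter : ∀ t : Fin n → ℕ,
        (∑' k : ℕ, ((fun s : Fin (n + 1) → ℕ => (N p n s : ℝ) * ∏ i, x i ^ s i) ∘ e1) (t, k))
        = (Nat.multinomial Finset.univ t : ℝ) *
            (1 / (1 - x 0) ^ (p * ((∑ i : Fin n, t i) + 1))) * ∏ i, x i.succ ^ t i := by
      intro t
      have H := (slice p n hp (z := x 0) hz1 t).mul_right (∏ i, x i.succ ^ t i)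
      rw [← H.tsum_eq]
      exact tsum_congr fun k => (hcons t k).symm
    simp only [houter]
    rw [← (sigmaEquiv n).summable_iff]
    refine (summable_sigma_of_nonneg ?_).2 ⟨?_, ?_⟩
    · rintro ⟨m, tc⟩
      have : (0:ℝ) ≤ 1 / (1 - x 0) ^ (p * ((∑ i : Fin n, (tc : Fin n → ℕ) i) + 1)) := by positivity
      exact mul_nonneg (mul_nonneg (Nat.cast_nonneg _) this)
        (Finset.prod_nonneg fun i _ => pow_nonneg (h0 i.succ) _)
    · intro m
      exact (hasSum_fintype _).summable
    · have hfib : ∀ m : ℕ,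
          (∑' tc : ↥(piAntidiag (univ : Finset (Fin n)) m),
            (Nat.multinomial Finset.univ (tc : Fin n → ℕ) : ℝ) *
              (1 / (1 - x 0) ^ (p * ((∑ i : Fin n, (tc : Fin n → ℕ) i) + 1))) *
              ∏ i, x i.succ ^ (tc : Fin n → ℕ) i)
          = (∑ i : Fin n, x i.succ) ^ m * C ^ (m + 1) := by
        intro m
        rw [tsum_fintype]
        rw [Finset.sum_coe_sort (piAntidiag (univ : Finset (Fin n)) m)
          (fun t => (Nat.multinomial Finset.univ t : ℝ) *
            (1 / (1 - x 0) ^ (p * ((∑ i : Fin n, t i) + 1))) * ∏ i, x i.succ ^ t i)]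
        calc ∑ t ∈ piAntidiag (univ : Finset (Fin n)) m,
              (Nat.multinomial Finset.univ t : ℝ) *
                (1 / (1 - x 0) ^ (p * ((∑ i : Fin n, t i) + 1))) * ∏ i, x i.succ ^ t i
            = ∑ t ∈ piAntidiag (univ : Finset (Fin n)) m,
              ((Nat.multinomial Finset.univ t : ℝ) * ∏ i, x i.succ ^ t i) * C ^ (m + 1) := by
              refine Finset.sum_congr rfl fun t ht => ?_
              obtain ⟨h1, -⟩ := Finset.mem_piAntidiag.1 ht
              rw [show (∑ i : Fin n, t i) = m from h1, hC, pow_mul]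
              rw [one_div, one_div, inv_pow]
              ring
          _ = (∑ t ∈ piAntidiag (univ : Finset (Fin n)) m,
                (Nat.multinomial Finset.univ t : ℝ) * ∏ i, x i.succ ^ t i) * C ^ (m + 1) := by
              rw [Finset.sum_mul]
          _ = (∑ i : Fin n, x i.succ) ^ m * C ^ (m + 1) := by
              rw [Finset.sum_pow_eq_sum_piAntidiag]
      have hgeo : Summable (fun m : ℕ => (∑ i : Fin n, x i.succ) ^ m * C ^ (m + 1)) :=
        Summable.congr ((hasSum_geometric_of_lt_one hw0 hw1).summable.mul_right C)
          (fun m => by rw [mul_pow, pow_succ]; ring)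
      exact hgeo.congr fun m => (hfib m).symm

lemma hasSum_complex (p n : ℕ) (hp : 1 ≤ p) (x : Fin (n + 1) → ℂ)
    (hx : ∀ i, ‖x i‖ < eps p n) :
    HasSum (fun s : Fin (n + 1) → ℕ => (N p n s : ℂ) * ∏ i, x i ^ s i)
      ((1 - x 0) ^ p - ∑ i : Fin n, x i.succ)⁻¹ := by
  classical
  obtain ⟨hz1, hne, hYlt, hD⟩ := norms p n x hx
  have hu : (1 - x 0) ^ p ≠ 0 := pow_ne_zero _ hne
  set Y : ℂ := ∑ i : Fin n, x i.succ with hYdef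
  set C : ℂ := ((1 - x 0) ^ p)⁻¹ with hC
  have hw : ‖Y * C‖ < 1 := by
    rw [norm_mul, hC, norm_inv, ← div_eq_mul_inv,
      div_lt_one (norm_pos_iff.2 hu)]
    exact hYlt
  set F : (Fin (n + 1) → ℕ) → ℂ := fun s => (N p n s : ℂ) * ∏ i, x i ^ s i with hF
  have hsum : Summable F := by
    apply Summable.of_norm
    have hr := summable_real p n hp (fun i => ‖x i‖) (fun i => norm_nonneg _)
      (fun i => by simpa using hx i)
    apply hr.congr
    intro s
    rw [hF]
    simp [norm_prod, norm_pow]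
  have H1 : HasSum F (∑' s, F s) := hsum.hasSum
  let e1 : ((Fin n → ℕ) × ℕ) ≃ (Fin (n + 1) → ℕ) :=
    (Equiv.prodComm _ _).trans (Fin.consEquiv fun _ => ℕ)
  have H2 : HasSum (F ∘ e1) (∑' s, F s) := (e1.hasSum_iff).2 H1
  have hcons : ∀ (t : Fin n → ℕ) (k : ℕ),
      (N p n (Fin.cons k t) : ℂ) * x 0 ^ k * ∏ i, x i.succ ^ t i
        = (F ∘ e1) (t, k) := by
    intro t k
    have he : e1 (t, k) = Fin.cons k t := rfl
    show _ = F (e1 (t, k))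
    rw [he, hF]
    show _ = (N p n (Fin.cons k t) : ℂ) * ∏ i : Fin (n + 1), x i ^ (Fin.cons k t) i
    rw [Fin.prod_univ_succ]
    simp only [Fin.cons_zero, Fin.cons_succ, mul_assoc]
  set G : (Fin n → ℕ) → ℂ := fun t => (Nat.multinomial Finset.univ t : ℂ) *
      (1 / (1 - x 0) ^ (p * ((∑ i : Fin n, t i) + 1))) * ∏ i, x i.succ ^ t i with hG
  have hGsum : ∀ t : Fin n → ℕ, HasSum (fun k => (F ∘ e1) (t, k)) (G t) := by
    intro t
    have H := (slice p n hp (z := x 0) hz1 t).mul_right (∏ i, x i.succ ^ t i)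
    rw [show (fun k : ℕ => (N p n (Fin.cons k t) : ℂ) * x 0 ^ k * ∏ i, x i.succ ^ t i)
        = fun k => (F ∘ e1) (t, k) from funext fun k => hcons t k] at H
    exact H
  have H3 : HasSum G (∑' s, F s) := H2.prod_fiberwise hGsum
  have H4 : HasSum (G ∘ (sigmaEquiv n)) (∑' s, F s) := ((sigmaEquiv n).hasSum_iff).2 H3
  have hfib : ∀ m : ℕ,
      HasSum (fun tc : ↥(piAntidiag (univ : Finset (Fin n)) m) => (G ∘ (sigmaEquiv n)) ⟨m, tc⟩)
        (Y ^ m * C ^ (m + 1)) := by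
    intro m
    have H := hasSum_fintype
      (fun tc : ↥(piAntidiag (univ : Finset (Fin n)) m) => (G ∘ (sigmaEquiv n)) ⟨m, tc⟩)
    have hv : (∑ tc : ↥(piAntidiag (univ : Finset (Fin n)) m), (G ∘ (sigmaEquiv n)) ⟨m, tc⟩)
        = Y ^ m * C ^ (m + 1) := by
      rw [show (fun tc : ↥(piAntidiag (univ : Finset (Fin n)) m) => (G ∘ (sigmaEquiv n)) ⟨m, tc⟩)
          = fun tc => G tc.1 from rfl]
      rw [Finset.sum_coe_sort (piAntidiag (univ : Finset (Fin n)) m) (fun t => G t)]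
      calc ∑ t ∈ piAntidiag (univ : Finset (Fin n)) m, G t
          = ∑ t ∈ piAntidiag (univ : Finset (Fin n)) m,
            ((Nat.multinomial Finset.univ t : ℂ) * ∏ i, x i.succ ^ t i) * C ^ (m + 1) := by
            refine Finset.sum_congr rfl fun t ht => ?_
            obtain ⟨h1, -⟩ := Finset.mem_piAntidiag.1 ht
            simp only [hG]
            rw [show (∑ i : Fin n, t i) = m from h1, hC, pow_mul]
            rw [one_div, inv_pow]
            ring
        _ = (∑ t ∈ piAntidiag (univ : Finset (Fin n)) m,
              (Nat.multinomial Finset.univ t : ℂ) * ∏ i, x i.succ ^ t i) * C ^ (m + 1) := by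
            rw [Finset.sum_mul]
        _ = Y ^ m * C ^ (m + 1) := by rw [Finset.sum_pow_eq_sum_piAntidiag]
    rw [hv] at H
    exact H
  have H5 : HasSum (fun m : ℕ => Y ^ m * C ^ (m + 1)) (∑' s, F s) := H4.sigma hfib
  have H6 : HasSum (fun m : ℕ => Y ^ m * C ^ (m + 1)) ((1 - Y * C)⁻¹ * C) := by
    have H := (hasSum_geometric_of_norm_lt_one hw).mul_right C
    rw [show (fun m : ℕ => (Y * C) ^ m * C) = fun m : ℕ => Y ^ m * C ^ (m + 1) from
      funext fun m => by rw [mul_pow, pow_succ]; ring] at H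
    exact H
  have hval : (1 - Y * C)⁻¹ * C = ((1 - x 0) ^ p - Y)⁻¹ := by
    have h2 : (1 : ℂ) - Y * C = ((1 - x 0) ^ p - Y) * C := by
      rw [hC]; field_simp
    rw [h2, mul_inv, hC, inv_inv, mul_assoc, mul_inv_cancel₀ hu, mul_one]
  rw [show (∑' s, F s) = ((1 - x 0) ^ p - Y)⁻¹ from hval ▸ H5.unique H6] at H1
  exact H1

end Stmt15Aux

/-- The hypergeometric series with the indicated coefficients sums, near the origin, to
the rational function `((1 − x₁)^p − x₂ − ⋯ − x_n)⁻¹`. -/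
theorem stmt15 (n : ℕ) (p : ℕ) (hp : 1 ≤ p)
    (σ : (Fin (n + 1) → ℕ) → ℕ) (hσ : ∀ s, σ s = ∑ i : Fin n, s i.succ)
    (c : (Fin (n + 1) → ℕ) → ℂ)
    (hc : ∀ s, c s =
      (((s 0 + p * (σ s + 1) - 1).factorial * (σ s).factorial : ℕ) : ℂ) /
      ((((∏ i, (s i).factorial) * (p * (σ s + 1) - 1).factorial : ℕ) : ℂ))) :
    ∃ W : Set (Fin (n + 1) → ℂ), IsOpen W ∧ (0 : Fin (n + 1) → ℂ) ∈ W ∧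
      ∀ x ∈ W,
        Summable (fun s : Fin (n + 1) → ℕ => ‖c s * ∏ i, x i ^ s i‖) ∧
        (1 - x 0) ^ p - (∑ i : Fin n, x i.succ) ≠ 0 ∧
        HasSum (fun s : Fin (n + 1) → ℕ => c s * ∏ i, x i ^ s i)
          ((1 - x 0) ^ p - ∑ i : Fin n, x i.succ)⁻¹ := by
  classical
  open Stmt15Aux in
  refine ⟨{x : Fin (n + 1) → ℂ | ∀ i, ‖x i‖ < eps p n}, ?_, ?_, ?_⟩
  · have : {x : Fin (n + 1) → ℂ | ∀ i, ‖x i‖ < eps p n}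
        = ⋂ i, {x : Fin (n + 1) → ℂ | ‖x i‖ < eps p n} := by
      ext y; simp [Set.mem_iInter]
    rw [this]
    exact isOpen_iInter_of_finite fun i =>
      isOpen_lt (continuous_norm.comp (continuous_apply i)) continuous_const
  · intro i
    simpa using eps_pos p n
  · intro x hx
    replace hx : ∀ i, ‖x i‖ < eps p n := hx
    have hcN : ∀ s, c s = (N p n s : ℂ) := by
      intro s
      rw [hc s, hσ s]
      exact c_eq p n hp s
    obtain ⟨-, -, -, hD⟩ := norms p n x hx
    refine ⟨?_, hD, ?_⟩
    · have habs := summable_real p n hp (fun i => ‖x i‖) (fun i => norm_nonneg _)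
        (fun i => by simpa using hx i)
      refine habs.congr fun s => ?_
      rw [hcN s]
      symm
      simp [norm_prod, norm_pow]
    · have H := hasSum_complex p n hp x hx
      refine H.congr_fun fun s => ?_
      rw [hcN s]
end

section
/- Let g(x_1,x_2) = 1 − 2x_1 − 3x_2 + x_1² − 6x_1x_2 + 3x_2² − x_2³. Then the complement ℝ² ∖ A_g of the amoeba of g has exactly 3 connected components. -/
open Real Topology

private lemma amoeba_mem_iff (p : Fin 2 → ℝ) :
    (∃ x : Fin 2 → ℂ, (∀ i, x i ≠ 0) ∧
      (1 - 2 * x 0 - 3 * x 1 + (x 0) ^ 2 - 6 * x 0 * x 1 + 3 * (x 1) ^ 2 - (x 1) ^ 3 = 0) ∧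
      ∀ i, p i = Real.log ‖x i‖) ↔
    |1 - Real.exp (p 1 / 2)| ≤ Real.exp (p 0 / 3) ∧
      Real.exp (p 0 / 3) ≤ 1 + Real.exp (p 1 / 2) := by
  constructor
  · rintro ⟨x, hx, hgx, hv⟩
    -- choose a square root of x 1
    obtain ⟨s0, hs0⟩ : ∃ s : ℂ, s ^ 2 = x 1 :=
      ⟨(x 1) ^ ((2 : ℕ)⁻¹ : ℂ), Complex.cpow_nat_inv_pow _ two_ne_zero⟩
    have hfact : (x 0 - (1 + s0) ^ 3) * (x 0 - (1 - s0) ^ 3) = 0 := by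
      rw [← hs0] at hgx
      linear_combination hgx
    -- get s with x 0 = (1+s)^3 and s^2 = x 1
    obtain ⟨s, hs, hx0⟩ : ∃ s : ℂ, s ^ 2 = x 1 ∧ x 0 = (1 + s) ^ 3 := by
      rcases mul_eq_zero.1 hfact with h | h
      · exact ⟨s0, hs0, sub_eq_zero.1 h⟩
      · exact ⟨-s0, by rw [neg_pow]; simpa using hs0,
          by rw [sub_eq_zero.1 h]; ring⟩
    have hs_ne : s ≠ 0 := by
      intro h; rw [h] at hs; simp at hs; exact hx 1 hs.symm
    have h1s_ne : (1 : ℂ) + s ≠ 0 := by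
      intro h
      apply hx 0
      rw [hx0, h]; ring
    set r := ‖s‖ with hrdef
    set w := ‖1 + s‖ with hwdef
    have hr : 0 < r := norm_pos_iff.mpr hs_ne
    have hw : 0 < w := norm_pos_iff.mpr h1s_ne
    have hp1 : p 1 = 2 * Real.log r := by
      rw [hv 1, ← hs, norm_pow, Real.log_pow]
      push_cast; ring
    have hp0 : p 0 = 3 * Real.log w := by
      rw [hv 0, hx0, norm_pow, Real.log_pow]
      push_cast; ring
    have her : Real.exp (p 1 / 2) = r := by
      rw [hp1]; rw [show 2 * Real.log r / 2 = Real.log r by ring, Real.exp_log hr]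
    have hew : Real.exp (p 0 / 3) = w := by
      rw [hp0]; rw [show 3 * Real.log w / 3 = Real.log w by ring, Real.exp_log hw]
    rw [her, hew]
    have tri1 : w ≤ 1 + r := by
      have := norm_add_le (1 : ℂ) s
      simpa using this
    have tri2 : |1 - r| ≤ w := by
      have := abs_norm_sub_norm_le (1 : ℂ) (-s)
      simpa [sub_neg_eq_add] using this
    exact ⟨tri2, tri1⟩
  · rintro ⟨h1, h2⟩
    set r := Real.exp (p 1 / 2) with hrdef
    set w := Real.exp (p 0 / 3) with hwdef
    have hr : 0 < r := Real.exp_pos _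
    have hw : 0 < w := Real.exp_pos _
    set c : ℝ := (w ^ 2 - 1 - r ^ 2) / (2 * r) with hcdef
    have hsq1 : (1 - r) ^ 2 ≤ w ^ 2 := by
      have := pow_le_pow_left₀ (abs_nonneg (1 - r)) h1 2
      simpa [sq_abs] using this
    have hsq2 : w ^ 2 ≤ (1 + r) ^ 2 := pow_le_pow_left₀ hw.le h2 2
    have hc1 : -1 ≤ c := by
      rw [hcdef, le_div_iff₀ (by positivity)]; nlinarith
    have hc2 : c ≤ 1 := by
      rw [hcdef, div_le_iff₀ (by positivity)]; nlinarith
    have hc2r : c * (2 * r) = w ^ 2 - 1 - r ^ 2 := by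
      rw [hcdef]; field_simp
    set y : ℝ := Real.sqrt (1 - c ^ 2) with hydef
    have hy : y ^ 2 = 1 - c ^ 2 := Real.sq_sqrt (by nlinarith)
    set s : ℂ := (↑(r * c) + ↑(r * y) * Complex.I : ℂ) with hsdef
    have habs_s : ‖s‖ = r := by
      rw [hsdef, Complex.norm_def, Complex.normSq_add_mul_I]
      rw [show (r * c) ^ 2 + (r * y) ^ 2 = r ^ 2 by nlinarith]
      exact Real.sqrt_sq hr.le
    have h1s : (1 : ℂ) + s = (↑(1 + r * c) + ↑(r * y) * Complex.I : ℂ) := by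
      rw [hsdef]; push_cast; ring
    have habs_1s : ‖1 + s‖ = w := by
      rw [h1s, Complex.norm_def, Complex.normSq_add_mul_I]
      rw [show (1 + r * c) ^ 2 + (r * y) ^ 2 = w ^ 2 by nlinarith]
      exact Real.sqrt_sq hw.le
    have hs_ne : s ≠ 0 := by
      intro h; rw [h] at habs_s; simp at habs_s; exact absurd habs_s.symm hr.ne'
    have h1s_ne : (1 : ℂ) + s ≠ 0 := by
      intro h; rw [h] at habs_1s; simp at habs_1s; exact absurd habs_1s.symm hw.ne'
    refine ⟨![(1 + s) ^ 3, s ^ 2], ?_, ?_, ?_⟩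
    · intro i
      fin_cases i
      · simpa using pow_ne_zero 3 h1s_ne
      · simpa using pow_ne_zero 2 hs_ne
    · simp only [Matrix.cons_val_zero, Matrix.cons_val_one, Matrix.head_cons]
      ring
    · intro i
      fin_cases i
      · show p 0 = Real.log ‖(1 + s) ^ 3‖
        rw [norm_pow, habs_1s, Real.log_pow, hwdef, Real.log_exp]
        push_cast; ring
      · show p 1 = Real.log ‖s ^ 2‖
        rw [norm_pow, habs_s, Real.log_pow, hrdef, Real.log_exp]
        push_cast; ring


private def mk2 (a b : ℝ) : Fin 2 → ℝ := fun i => if i = 0 then a else b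

private lemma mk2_zero (a b : ℝ) : mk2 a b 0 = a := rfl
private lemma mk2_one (a b : ℝ) : mk2 a b 1 = b := rfl

private lemma eq_mk2 (p : Fin 2 → ℝ) : p = mk2 (p 0) (p 1) := by
  funext i; fin_cases i <;> rfl

private lemma continuous_mk2 {f g : ℝ × ℝ → ℝ} (hf : Continuous f) (hg : Continuous g) :
    Continuous fun q => mk2 (f q) (g q) := by
  apply continuous_pi; intro i
  by_cases h : i = 0 <;> simp only [mk2, h, if_true, if_false] <;> assumption

private def SetA : Set (Fin 2 → ℝ) := {p | 1 + Real.exp (p 1 / 2) < Real.exp (p 0 / 3)}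
private def SetB : Set (Fin 2 → ℝ) := {p | Real.exp (p 0 / 3) < Real.exp (p 1 / 2) - 1}
private def SetC : Set (Fin 2 → ℝ) := {p | Real.exp (p 0 / 3) < 1 - Real.exp (p 1 / 2)}

private lemma contP0 : Continuous fun p : Fin 2 → ℝ => Real.exp (p 0 / 3) :=
  (Real.continuous_exp.comp ((continuous_apply 0).div_const 3))

private lemma contP1 : Continuous fun p : Fin 2 → ℝ => Real.exp (p 1 / 2) :=
  (Real.continuous_exp.comp ((continuous_apply 1).div_const 2))

private lemma openA : IsOpen SetA := isOpen_lt (by fun_prop) contP0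
private lemma openB : IsOpen SetB := isOpen_lt contP0 (by fun_prop)
private lemma openC : IsOpen SetC := isOpen_lt contP0 (by fun_prop)

private lemma precA : IsPreconnected SetA := by
  have hc : Continuous fun q : ℝ × ℝ => 1 + Real.exp (q.2 / 2) + Real.exp q.1 := by
    fun_prop
  have hF : Continuous fun q : ℝ × ℝ =>
      mk2 (3 * Real.log (1 + Real.exp (q.2 / 2) + Real.exp q.1)) q.2 :=
    continuous_mk2 (continuous_const.mul (hc.log fun q => by positivity)) continuous_snd
  have hrange : Set.range (fun q : ℝ × ℝ =>
      mk2 (3 * Real.log (1 + Real.exp (q.2 / 2) + Real.exp q.1)) q.2) = SetA := by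
    ext p
    constructor
    · rintro ⟨⟨t, v⟩, rfl⟩
      show 1 + Real.exp (mk2 _ v 1 / 2) < Real.exp (mk2 _ v 0 / 3)
      rw [mk2_zero, mk2_one]
      have hpos : (0:ℝ) < 1 + Real.exp (v / 2) + Real.exp t := by positivity
      rw [show 3 * Real.log (1 + Real.exp (v / 2) + Real.exp t) / 3
            = Real.log (1 + Real.exp (v / 2) + Real.exp t) by ring,
          Real.exp_log hpos]
      linarith [Real.exp_pos t]
    · intro hp
      have hp' : 1 + Real.exp (p 1 / 2) < Real.exp (p 0 / 3) := hp
      refine ⟨(Real.log (Real.exp (p 0 / 3) - 1 - Real.exp (p 1 / 2)), p 1), ?_⟩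
      show mk2 (3 * Real.log (1 + Real.exp (p 1 / 2) +
        Real.exp (Real.log (Real.exp (p 0 / 3) - 1 - Real.exp (p 1 / 2))))) (p 1) = p
      have he : 1 + Real.exp (p 1 / 2) +
          Real.exp (Real.log (Real.exp (p 0 / 3) - 1 - Real.exp (p 1 / 2)))
          = Real.exp (p 0 / 3) := by
        rw [Real.exp_log (by linarith)]; ring
      rw [he, Real.log_exp, show 3 * (p 0 / 3) = p 0 by ring]
      exact (eq_mk2 p).symm
  rw [← hrange]
  exact (isPreconnected_range hF)

private lemma precB : IsPreconnected SetB := by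
  have hF : Continuous fun q : ℝ × ℝ =>
      mk2 (3 * (q.1 - Real.exp q.2)) (2 * Real.log (1 + Real.exp q.1)) := by
    have hc : Continuous fun q : ℝ × ℝ => 1 + Real.exp q.1 := by fun_prop
    exact continuous_mk2 (by fun_prop)
      (continuous_const.mul (hc.log fun q => by positivity))
  have hrange : Set.range (fun q : ℝ × ℝ =>
      mk2 (3 * (q.1 - Real.exp q.2)) (2 * Real.log (1 + Real.exp q.1))) = SetB := by
    ext p
    constructor
    · rintro ⟨⟨a, t⟩, rfl⟩
      show Real.exp (mk2 _ _ 0 / 3) < Real.exp (mk2 _ _ 1 / 2) - 1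
      rw [mk2_zero, mk2_one]
      have h1 : (0:ℝ) < 1 + Real.exp a := by positivity
      rw [show 3 * (a - Real.exp t) / 3 = a - Real.exp t by ring,
          show 2 * Real.log (1 + Real.exp a) / 2 = Real.log (1 + Real.exp a) by ring,
          Real.exp_log h1]
      have : Real.exp (a - Real.exp t) < Real.exp a :=
        Real.exp_lt_exp.2 (by linarith [Real.exp_pos t])
      linarith
    · intro hp
      have hp' : Real.exp (p 0 / 3) < Real.exp (p 1 / 2) - 1 := hp
      have hw : (0:ℝ) < Real.exp (p 0 / 3) := Real.exp_pos _
      have hr1 : (0:ℝ) < Real.exp (p 1 / 2) - 1 := by linarith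
      set a := Real.log (Real.exp (p 1 / 2) - 1) with hadef
      have hea : Real.exp a = Real.exp (p 1 / 2) - 1 := Real.exp_log hr1
      have hlt : p 0 / 3 < a := by
        have h := hp'
        rw [← hea] at h
        exact Real.exp_lt_exp.1 h
      refine ⟨(a, Real.log (a - p 0 / 3)), ?_⟩
      show mk2 (3 * (a - Real.exp (Real.log (a - p 0 / 3))))
        (2 * Real.log (1 + Real.exp a)) = p
      have h1 : 3 * (a - Real.exp (Real.log (a - p 0 / 3))) = p 0 := by
        rw [Real.exp_log (by linarith)]; ring
      have h2 : 2 * Real.log (1 + Real.exp a) = p 1 := by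
        rw [hea, show 1 + (Real.exp (p 1 / 2) - 1) = Real.exp (p 1 / 2) by ring,
          Real.log_exp]
        ring
      rw [h1, h2]
      exact (eq_mk2 p).symm
  rw [← hrange]
  exact (isPreconnected_range hF)

private lemma precC : IsPreconnected SetC := by
  have hF : Continuous fun q : ℝ × ℝ =>
      mk2 (-3 * Real.exp q.2 - 3 * Real.log (1 + Real.exp q.1))
          (2 * q.1 - 2 * Real.log (1 + Real.exp q.1)) := by
    have hc : Continuous fun q : ℝ × ℝ => 1 + Real.exp q.1 := by fun_prop
    have hlog : Continuous fun q : ℝ × ℝ => Real.log (1 + Real.exp q.1) :=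
      hc.log fun q => by positivity
    exact continuous_mk2
      (((continuous_const.mul (Real.continuous_exp.comp continuous_snd))).sub
        (continuous_const.mul hlog))
      ((continuous_const.mul continuous_fst).sub (continuous_const.mul hlog))
  have hrange : Set.range (fun q : ℝ × ℝ =>
      mk2 (-3 * Real.exp q.2 - 3 * Real.log (1 + Real.exp q.1))
          (2 * q.1 - 2 * Real.log (1 + Real.exp q.1))) = SetC := by
    ext p
    constructor
    · rintro ⟨⟨b, t⟩, rfl⟩
      show Real.exp (mk2 _ _ 0 / 3) < 1 - Real.exp (mk2 _ _ 1 / 2)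
      rw [mk2_zero, mk2_one]
      have h1 : (0:ℝ) < 1 + Real.exp b := by positivity
      rw [show (-3 * Real.exp t - 3 * Real.log (1 + Real.exp b)) / 3
            = -Real.exp t - Real.log (1 + Real.exp b) by ring,
          show (2 * b - 2 * Real.log (1 + Real.exp b)) / 2
            = b - Real.log (1 + Real.exp b) by ring]
      rw [Real.exp_sub, Real.exp_sub, Real.exp_log h1]
      rw [div_lt_iff₀ h1, sub_mul, div_mul_cancel₀ _ h1.ne']
      have ht : Real.exp (-Real.exp t) < 1 := by
        rw [Real.exp_lt_one_iff]
        have := Real.exp_pos t; linarith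
      nlinarith [Real.exp_pos b, Real.exp_pos (-Real.exp t)]
    · intro hp
      have hp' : Real.exp (p 0 / 3) < 1 - Real.exp (p 1 / 2) := hp
      have hw : (0:ℝ) < Real.exp (p 0 / 3) := Real.exp_pos _
      have hrpos : (0:ℝ) < Real.exp (p 1 / 2) := Real.exp_pos _
      have h1r : (0:ℝ) < 1 - Real.exp (p 1 / 2) := by linarith
      set b := Real.log (Real.exp (p 1 / 2) / (1 - Real.exp (p 1 / 2))) with hbdef
      have heb : Real.exp b = Real.exp (p 1 / 2) / (1 - Real.exp (p 1 / 2)) :=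
        Real.exp_log (by positivity)
      have h1eb : 1 + Real.exp b = (1 - Real.exp (p 1 / 2))⁻¹ := by
        rw [heb]; field_simp; ring
      have hlogb : Real.log (1 + Real.exp b) = -Real.log (1 - Real.exp (p 1 / 2)) := by
        rw [h1eb, Real.log_inv]
      have hlt : p 0 / 3 < Real.log (1 - Real.exp (p 1 / 2)) := by
        have h := hp'
        rw [← Real.exp_log h1r] at h
        exact Real.exp_lt_exp.1 h
      refine ⟨(b, Real.log (Real.log (1 - Real.exp (p 1 / 2)) - p 0 / 3)), ?_⟩
      show mk2 (-3 * Real.exp (Real.log (Real.log (1 - Real.exp (p 1 / 2)) - p 0 / 3))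
          - 3 * Real.log (1 + Real.exp b))
        (2 * b - 2 * Real.log (1 + Real.exp b)) = p
      have h1 : -3 * Real.exp (Real.log (Real.log (1 - Real.exp (p 1 / 2)) - p 0 / 3))
          - 3 * Real.log (1 + Real.exp b) = p 0 := by
        rw [Real.exp_log (by linarith), hlogb]; ring
      have h2 : 2 * b - 2 * Real.log (1 + Real.exp b) = p 1 := by
        rw [hlogb, hbdef, Real.log_div hrpos.ne' h1r.ne', Real.log_exp]
        ring
      rw [h1, h2]
      exact (eq_mk2 p).symm
  rw [← hrange]
  exact (isPreconnected_range hF)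

private lemma memA (p : Fin 2 → ℝ) :
    p ∈ SetA ↔ 1 + Real.exp (p 1 / 2) < Real.exp (p 0 / 3) := Iff.rfl
private lemma memB (p : Fin 2 → ℝ) :
    p ∈ SetB ↔ Real.exp (p 0 / 3) < Real.exp (p 1 / 2) - 1 := Iff.rfl
private lemma memC (p : Fin 2 → ℝ) :
    p ∈ SetC ↔ Real.exp (p 0 / 3) < 1 - Real.exp (p 1 / 2) := Iff.rfl

/-- The complement of the amoeba of
`g = 1 − 2x₁ − 3x₂ + x₁² − 6x₁x₂ + 3x₂² − x₂³` has exactly 3 connected components. -/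
theorem stmt17 (g : (Fin 2 → ℂ) → ℂ)
    (hg : ∀ x : Fin 2 → ℂ, g x =
      1 - 2 * x 0 - 3 * x 1 + (x 0) ^ 2 - 6 * x 0 * x 1 + 3 * (x 1) ^ 2 - (x 1) ^ 3)
    (Ag : Set (Fin 2 → ℝ))
    (hAg : Ag = {v | ∃ x : Fin 2 → ℂ, (∀ i, x i ≠ 0) ∧ g x = 0 ∧
      ∀ i, v i = Real.log ‖x i‖}) :
    Nat.card (ConnectedComponents {v : Fin 2 → ℝ // v ∉ Ag}) = 3 := by
  classical
  -- membership characterization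
  have hAg' : ∀ p : Fin 2 → ℝ, p ∈ Ag ↔
      (|1 - Real.exp (p 1 / 2)| ≤ Real.exp (p 0 / 3) ∧
        Real.exp (p 0 / 3) ≤ 1 + Real.exp (p 1 / 2)) := by
    intro p
    rw [hAg, ← amoeba_mem_iff p]
    simp only [Set.mem_setOf_eq, hg]
  have hcompl : ∀ p : Fin 2 → ℝ, p ∉ Ag ↔ (p ∈ SetA ∨ p ∈ SetB ∨ p ∈ SetC) := by
    intro p
    rw [hAg' p, memA, memB, memC]
    have hw : (0:ℝ) < Real.exp (p 0 / 3) := Real.exp_pos _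
    constructor
    · intro h
      push_neg at h
      by_cases h1 : |1 - Real.exp (p 1 / 2)| ≤ Real.exp (p 0 / 3)
      · exact Or.inl (h h1)
      · push_neg at h1
        rcases abs_cases (1 - Real.exp (p 1 / 2)) with ⟨he, _⟩ | ⟨he, _⟩
        · exact Or.inr (Or.inr (by linarith))
        · exact Or.inr (Or.inl (by linarith))
    · rintro (h | h | h) ⟨hb1, hb2⟩
      · linarith
      · linarith [neg_le_abs (1 - Real.exp (p 1 / 2))]
      · linarith [le_abs_self (1 - Real.exp (p 1 / 2))]
  -- disjointness
  have hAB : ∀ p : Fin 2 → ℝ, p ∈ SetA → p ∈ SetB → False := by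
    intro p h1 h2
    rw [memA] at h1; rw [memB] at h2
    linarith [Real.exp_pos (p 1 / 2)]
  have hAC : ∀ p : Fin 2 → ℝ, p ∈ SetA → p ∈ SetC → False := by
    intro p h1 h2
    rw [memA] at h1; rw [memC] at h2
    linarith [Real.exp_pos (p 1 / 2)]
  have hBC : ∀ p : Fin 2 → ℝ, p ∈ SetB → p ∈ SetC → False := by
    intro p h1 h2
    rw [memB] at h1; rw [memC] at h2
    linarith [Real.exp_pos (p 0 / 3)]
  set X := {v : Fin 2 → ℝ // v ∉ Ag} with hXdef
  let Φ : X → Fin 3 := fun x => if x.val ∈ SetA then 0 else if x.val ∈ SetB then 1 else 2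
  have hΦA : ∀ x : X, Φ x = 0 ↔ x.val ∈ SetA := by
    intro x
    by_cases hA : x.val ∈ SetA
    · simp [Φ, hA]
    · by_cases hB : x.val ∈ SetB <;> simp [Φ, hA, hB]
  have hΦB : ∀ x : X, Φ x = 1 ↔ x.val ∈ SetB := by
    intro x
    by_cases hA : x.val ∈ SetA
    · simp only [Φ, hA, if_true]
      constructor
      · intro h; exact absurd h (by decide)
      · intro h; exact absurd (hAB _ hA h) not_false
    · by_cases hB : x.val ∈ SetB <;> simp [Φ, hA, hB]
  have hΦC : ∀ x : X, Φ x = 2 ↔ x.val ∈ SetC := by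
    intro x
    by_cases hA : x.val ∈ SetA
    · simp only [Φ, hA, if_true]
      constructor
      · intro h; exact absurd h (by decide)
      · intro h; exact absurd (hAC _ hA h) not_false
    · by_cases hB : x.val ∈ SetB
      · simp only [Φ, hA, if_false, hB, if_true]
        constructor
        · intro h; exact absurd h (by decide)
        · intro h; exact absurd (hBC _ hB h) not_false
      · simp only [Φ, if_neg hA, if_neg hB]
        constructor
        · intro _
          rcases (hcompl x.val).1 x.property with h | h | h
          · exact absurd h hA
          · exact absurd h hB
          · exact h
        · intro _; trivial
  have hΦcont : Continuous Φ := by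
    rw [continuous_discrete_rng]
    intro b
    fin_cases b
    · have : Φ ⁻¹' {0} = Subtype.val ⁻¹' SetA := Set.ext fun x => by
        simp only [Set.mem_preimage, Set.mem_singleton_iff, hΦA x]
      rw [show ({⟨0, by norm_num⟩} : Set (Fin 3)) = {0} from rfl, this]
      exact openA.preimage continuous_subtype_val
    · have : Φ ⁻¹' {1} = Subtype.val ⁻¹' SetB := Set.ext fun x => by
        simp only [Set.mem_preimage, Set.mem_singleton_iff, hΦB x]
      rw [show ({⟨1, by norm_num⟩} : Set (Fin 3)) = {1} from rfl, this]
      exact openB.preimage continuous_subtype_val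
    · have : Φ ⁻¹' {2} = Subtype.val ⁻¹' SetC := Set.ext fun x => by
        simp only [Set.mem_preimage, Set.mem_singleton_iff, hΦC x]
      rw [show ({⟨2, by norm_num⟩} : Set (Fin 3)) = {2} from rfl, this]
      exact openC.preimage continuous_subtype_val
  -- the lift
  let Ψ : ConnectedComponents X → Fin 3 := hΦcont.connectedComponentsLift
  have hΨcoe : ∀ x : X, Ψ (x : ConnectedComponents X) = Φ x :=
    fun x => hΦcont.connectedComponentsLift_apply_coe x
  -- key: points in the same region have the same component
  have key : ∀ S : Set (Fin 2 → ℝ), IsPreconnected S → (∀ p ∈ S, p ∉ Ag) →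
      ∀ x y : X, x.val ∈ S → y.val ∈ S →
        (x : ConnectedComponents X) = (y : ConnectedComponents X) := by
    intro S hS hsub x y hx hy
    have hT : IsPreconnected (Subtype.val ⁻¹' S : Set X) := by
      apply (IsInducing.subtypeVal.isPreconnected_image
        (s := (Subtype.val ⁻¹' S : Set X))).mp
      convert hS using 1
      apply Set.ext
      intro p
      constructor
      · rintro ⟨q, hq, rfl⟩; exact hq
      · intro hp; exact ⟨⟨p, hsub p hp⟩, hp, rfl⟩
    have hsubc := hT.subset_connectedComponent (x := y) hy
    exact ConnectedComponents.coe_eq_coe'.mpr (hsubc hx)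
  -- witnesses
  have hpA : mk2 3 0 ∈ SetA := by
    rw [memA, mk2_zero, mk2_one]
    rw [show (0:ℝ)/2 = 0 by norm_num, Real.exp_zero, show (3:ℝ)/3 = 1 by norm_num]
    linarith [Real.exp_one_gt_d9]
  have hpB : mk2 0 (2 * Real.log 3) ∈ SetB := by
    rw [memB, mk2_zero, mk2_one]
    rw [show (0:ℝ)/3 = 0 by norm_num, Real.exp_zero,
        show 2 * Real.log 3 / 2 = Real.log 3 by ring, Real.exp_log (by norm_num)]
    norm_num
  have hpC : mk2 (-3) (-2) ∈ SetC := by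
    rw [memC, mk2_zero, mk2_one]
    rw [show (-3:ℝ)/3 = -1 by norm_num, show (-2:ℝ)/2 = -1 by norm_num]
    have h1 : Real.exp (-1) * Real.exp 1 = 1 := by
      rw [← Real.exp_add]; norm_num
    have h2 := Real.exp_one_gt_d9
    have h3 := Real.exp_pos (-1 : ℝ)
    nlinarith
  have surj : Function.Surjective Ψ := by
    intro b
    fin_cases b
    · refine ⟨ConnectedComponents.mk ⟨mk2 3 0, (hcompl _).2 (Or.inl hpA)⟩, ?_⟩
      rw [hΨcoe]; exact (hΦA _).2 hpA
    · refine ⟨ConnectedComponents.mk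
        ⟨mk2 0 (2 * Real.log 3), (hcompl _).2 (Or.inr (Or.inl hpB))⟩, ?_⟩
      rw [hΨcoe]; exact (hΦB _).2 hpB
    · refine ⟨ConnectedComponents.mk
        ⟨mk2 (-3) (-2), (hcompl _).2 (Or.inr (Or.inr hpC))⟩, ?_⟩
      rw [hΨcoe]; exact (hΦC _).2 hpC
  have inj : Function.Injective Ψ := by
    intro u v h
    obtain ⟨x, rfl⟩ := ConnectedComponents.surjective_coe u
    obtain ⟨y, rfl⟩ := ConnectedComponents.surjective_coe v
    rw [hΨcoe, hΨcoe] at h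
    rcases (hcompl x.val).1 x.property with hx | hx | hx
    · have hy : y.val ∈ SetA := by
        rw [← hΦA y, ← h]; exact (hΦA x).2 hx
      exact key SetA precA (fun p hp => (hcompl p).2 (Or.inl hp)) x y hx hy
    · have hy : y.val ∈ SetB := by
        rw [← hΦB y, ← h]; exact (hΦB x).2 hx
      exact key SetB precB (fun p hp => (hcompl p).2 (Or.inr (Or.inl hp))) x y hx hy
    · have hy : y.val ∈ SetC := by
        rw [← hΦC y, ← h]; exact (hΦC x).2 hx
      exact key SetC precC (fun p hp => (hcompl p).2 (Or.inr (Or.inr hp))) x y hx hy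
  rw [Nat.card_eq_of_bijective Ψ ⟨inj, surj⟩]
  simp
end
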